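/- arXiv:0906.0617 — 9 statements merged into one kernel-verified Lean document; each statement's English description precedes it below -/
import Mathlib

section
/- Let E be a normed vector space, E' a Banach space, ε > 0, and 0 ≤ p < 1. If f : E → E' satisfies ‖f(x+y) − f(x) − f(y)‖ ≤ ε(‖x‖^p + ‖y‖^p) for all x, y ∈ E, then there exists a unique additive mapping T : E → E' such that ‖f(x) − T(x)‖ ≤ (2ε/(2 − 2^p))·‖x‖^p for all x ∈ E. -/
open Filter Topology

/-- Rassias's stability theorem: `0 ≤ p < 1`. -/
theorem rassias_stability {E E' : Type*}
    [NormedAddCommGroup E] [NormedSpace ℝ E]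
    [NormedAddCommGroup E'] [NormedSpace ℝ E'] [CompleteSpace E']
    (f : E → E') (ε p : ℝ) (hε : 0 < ε) (hp0 : 0 ≤ p) (hp1 : p < 1)
    (hf : ∀ x y : E, ‖f (x + y) - f x - f y‖ ≤ ε * (‖x‖ ^ p + ‖y‖ ^ p)) :
    ∃! T : E → E',
      (∀ x y : E, T (x + y) = T x + T y) ∧
      (∀ x : E, ‖f x - T x‖ ≤ (2 * ε / (2 - (2 : ℝ) ^ p)) * ‖x‖ ^ p) := by
  set r : ℝ := (2 : ℝ) ^ p / 2 with hr_def
  have h2p_pos : (0 : ℝ) < (2 : ℝ) ^ p := Real.rpow_pos_of_pos (by norm_num) p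
  have h2p_lt : (2 : ℝ) ^ p < 2 := by
    calc (2 : ℝ) ^ p < (2 : ℝ) ^ (1 : ℝ) :=
          Real.rpow_lt_rpow_left_iff (by norm_num) |>.mpr hp1
      _ = 2 := Real.rpow_one 2
  have hden : (0 : ℝ) < 2 - (2 : ℝ) ^ p := by linarith
  have hr0 : 0 < r := by positivity
  have hr1 : r < 1 := by rw [hr_def]; linarith
  -- key: ((2:ℝ)^n) ^ p = ((2:ℝ)^p)^n  (left is rpow of a pow)
  have hkey : ∀ n : ℕ, ((2 : ℝ) ^ n) ^ p = ((2 : ℝ) ^ p) ^ n := by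
    intro n
    rw [← Real.rpow_natCast (2 : ℝ) n, ← Real.rpow_natCast ((2:ℝ)^p) n,
      ← Real.rpow_mul (by norm_num), ← Real.rpow_mul (by norm_num), mul_comm]
  have hnorm_smul : ∀ (n : ℕ) (x : E), ‖((2:ℝ)^n) • x‖ = (2:ℝ)^n * ‖x‖ := by
    intro n x
    rw [norm_smul, Real.norm_eq_abs, abs_of_pos (by positivity)]
  have hnorm_pow : ∀ (n : ℕ) (x : E), ‖((2:ℝ)^n) • x‖ ^ p = ((2:ℝ)^p)^n * ‖x‖ ^ p := by
    intro n x
    rw [hnorm_smul, Real.mul_rpow (by positivity) (norm_nonneg x), hkey]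
  -- the approximating sequence
  set g : E → ℕ → E' := fun x n => ((2:ℝ)⁻¹ ^ n) • f (((2:ℝ)^n) • x) with hg_def
  -- basic doubling estimate
  have hdouble : ∀ x : E, ‖f ((2:ℝ) • x) - (2:ℝ) • f x‖ ≤ 2 * ε * ‖x‖ ^ p := by
    intro x
    have := hf x x
    rw [two_smul, two_smul]
    calc ‖f (x + x) - (f x + f x)‖ = ‖f (x + x) - f x - f x‖ := by
          rw [sub_add_eq_sub_sub]
      _ ≤ ε * (‖x‖ ^ p + ‖x‖ ^ p) := this
      _ = 2 * ε * ‖x‖ ^ p := by ring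
  -- Cauchy estimate
  have hcauchy : ∀ (x : E) (n : ℕ),
      dist (g x n) (g x (n + 1)) ≤ (ε * ‖x‖ ^ p) * r ^ n := by
    intro x n
    have h1 : ((2:ℝ) ^ (n+1)) • x = (2:ℝ) • (((2:ℝ)^n) • x) := by
      rw [← mul_smul]; ring_nf
    have h2 : g x n - g x (n+1)
        = ((2:ℝ)⁻¹ ^ (n+1)) • ((2:ℝ) • f (((2:ℝ)^n) • x) - f ((2:ℝ) • (((2:ℝ)^n) • x))) := by
      rw [hg_def]
      simp only [h1, smul_sub, ← mul_smul]
      congr 1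
      · rw [pow_succ]; ring_nf
    rw [dist_eq_norm, h2, norm_smul, Real.norm_eq_abs, abs_of_pos (by positivity),
      norm_sub_rev]
    calc ((2:ℝ)⁻¹ ^ (n+1)) * ‖f ((2:ℝ) • (((2:ℝ)^n) • x)) - (2:ℝ) • f (((2:ℝ)^n) • x)‖
        ≤ ((2:ℝ)⁻¹ ^ (n+1)) * (2 * ε * ‖((2:ℝ)^n) • x‖ ^ p) := by
          apply mul_le_mul_of_nonneg_left (hdouble _) (by positivity)
      _ = (ε * ‖x‖ ^ p) * r ^ n := by
          rw [hnorm_pow, hr_def, pow_succ, div_pow]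
          field_simp
          ring_nf
          simp only [mul_assoc, ← mul_pow]
          norm_num
  -- existence of limits
  have hconv : ∀ x : E, ∃ L : E', Tendsto (g x) atTop (𝓝 L) := fun x =>
    cauchySeq_tendsto_of_complete (cauchySeq_of_le_geometric r _ hr1 (hcauchy x))
  choose T hT using hconv
  have hg0 : ∀ x : E, g x 0 = f x := by intro x; simp [hg_def]
  -- the bound
  have hbound : ∀ x : E, ‖f x - T x‖ ≤ (2 * ε / (2 - (2 : ℝ) ^ p)) * ‖x‖ ^ p := by
    intro x
    have := dist_le_of_le_geometric_of_tendsto₀ r (ε * ‖x‖ ^ p) hr1 (hcauchy x) (hT x)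
    rw [hg0, dist_eq_norm] at this
    calc ‖f x - T x‖ ≤ (ε * ‖x‖ ^ p) / (1 - r) := this
      _ = (2 * ε / (2 - (2 : ℝ) ^ p)) * ‖x‖ ^ p := by
          rw [hr_def]; field_simp
  -- additivity
  have hadd : ∀ x y : E, T (x + y) = T x + T y := by
    intro x y
    have hlim : Tendsto (fun n => g (x+y) n - (g x n + g y n)) atTop
        (𝓝 (T (x+y) - (T x + T y))) := (hT (x+y)).sub ((hT x).add (hT y))
    have hlim0 : Tendsto (fun n => g (x+y) n - (g x n + g y n)) atTop (𝓝 0) := by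
      refine squeeze_zero_norm (a := fun n => (ε * (‖x‖ ^ p + ‖y‖ ^ p)) * r ^ n) ?_ ?_
      · intro n
        have hsplit : ((2:ℝ)^n) • (x + y) = ((2:ℝ)^n) • x + ((2:ℝ)^n) • y := smul_add _ _ _
        have h1 : g (x+y) n - (g x n + g y n)
            = ((2:ℝ)⁻¹ ^ n) • (f (((2:ℝ)^n) • x + ((2:ℝ)^n) • y)
                - f (((2:ℝ)^n) • x) - f (((2:ℝ)^n) • y)) := by
          rw [hg_def]; simp only [hsplit, smul_sub, smul_add]; abel
        rw [h1, norm_smul, Real.norm_eq_abs, abs_of_pos (by positivity)]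
        calc ((2:ℝ)⁻¹ ^ n) * ‖f (((2:ℝ)^n) • x + ((2:ℝ)^n) • y)
                - f (((2:ℝ)^n) • x) - f (((2:ℝ)^n) • y)‖
            ≤ ((2:ℝ)⁻¹ ^ n) * (ε * (‖((2:ℝ)^n) • x‖ ^ p + ‖((2:ℝ)^n) • y‖ ^ p)) :=
              mul_le_mul_of_nonneg_left (hf _ _) (by positivity)
          _ = (ε * (‖x‖ ^ p + ‖y‖ ^ p)) * r ^ n := by
              rw [hnorm_pow, hnorm_pow, hr_def, div_pow]
              field_simp
              ring_nf
              simp only [mul_assoc, ← mul_pow]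
              norm_num
      · simpa using (tendsto_pow_atTop_nhds_zero_of_lt_one hr0.le hr1).const_mul
          (ε * (‖x‖ ^ p + ‖y‖ ^ p))
    have := tendsto_nhds_unique hlim hlim0
    rwa [sub_eq_zero] at this
  refine ⟨T, ⟨hadd, hbound⟩, ?_⟩
  -- uniqueness
  rintro T' ⟨hadd', hbound'⟩
  funext x
  -- additive maps scale by powers of two
  have hscale : ∀ (S : E → E'), (∀ a b : E, S (a + b) = S a + S b) →
      ∀ (n : ℕ) (y : E), S (((2:ℝ)^n) • y) = ((2:ℝ)^n) • S y := by
    intro S hS n y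
    induction n with
    | zero => simp
    | succ n ih =>
      have h1 : ((2:ℝ) ^ (n+1)) • y = ((2:ℝ)^n) • y + ((2:ℝ)^n) • y := by
        rw [← two_smul ℝ (((2:ℝ)^n) • y), ← mul_smul]; ring_nf
      rw [h1, hS, ih, ← two_smul ℝ (((2:ℝ)^n) • S y), ← mul_smul]
      congr 1; ring
  have hmain : ∀ n : ℕ, ‖T' x - T x‖
      ≤ (2 * (2 * ε / (2 - (2 : ℝ) ^ p)) * ‖x‖ ^ p) * r ^ n := by
    intro n
    have h1 : ‖T' (((2:ℝ)^n) • x) - T (((2:ℝ)^n) • x)‖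
        ≤ 2 * (2 * ε / (2 - (2 : ℝ) ^ p)) * (((2:ℝ)^p)^n * ‖x‖ ^ p) := by
      calc ‖T' (((2:ℝ)^n) • x) - T (((2:ℝ)^n) • x)‖
          ≤ ‖f (((2:ℝ)^n) • x) - T' (((2:ℝ)^n) • x)‖
            + ‖f (((2:ℝ)^n) • x) - T (((2:ℝ)^n) • x)‖ := by
            rw [← norm_neg (f (((2:ℝ)^n) • x) - T' (((2:ℝ)^n) • x))]
            calc ‖T' (((2:ℝ)^n) • x) - T (((2:ℝ)^n) • x)‖
                = ‖(-(f (((2:ℝ)^n) • x) - T' (((2:ℝ)^n) • x)))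
                    + (f (((2:ℝ)^n) • x) - T (((2:ℝ)^n) • x))‖ := by abel_nf
              _ ≤ _ := norm_add_le _ _
        _ ≤ (2 * ε / (2 - (2 : ℝ) ^ p)) * ‖((2:ℝ)^n) • x‖ ^ p
            + (2 * ε / (2 - (2 : ℝ) ^ p)) * ‖((2:ℝ)^n) • x‖ ^ p :=
            add_le_add (hbound' _) (hbound _)
        _ = 2 * (2 * ε / (2 - (2 : ℝ) ^ p)) * (((2:ℝ)^p)^n * ‖x‖ ^ p) := by
            rw [hnorm_pow]; ring
    rw [hscale T' hadd' n x, hscale T hadd n x, ← smul_sub, norm_smul,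
      Real.norm_eq_abs, abs_of_pos (by positivity)] at h1
    have h2 : ‖T' x - T x‖ ≤
        (2 * (2 * ε / (2 - (2 : ℝ) ^ p)) * (((2:ℝ)^p)^n * ‖x‖ ^ p)) / (2:ℝ)^n := by
      rw [le_div_iff₀' (by positivity)]
      exact h1
    calc ‖T' x - T x‖ ≤ _ := h2
      _ = (2 * (2 * ε / (2 - (2 : ℝ) ^ p)) * ‖x‖ ^ p) * r ^ n := by
          rw [hr_def, div_pow]; field_simp
  have hlim0 : Tendsto (fun n : ℕ =>
      (2 * (2 * ε / (2 - (2 : ℝ) ^ p)) * ‖x‖ ^ p) * r ^ n) atTop (𝓝 0) := by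
    simpa using (tendsto_pow_atTop_nhds_zero_of_lt_one hr0.le hr1).const_mul
      (2 * (2 * ε / (2 - (2 : ℝ) ^ p)) * ‖x‖ ^ p)
  have : ‖T' x - T x‖ ≤ 0 :=
    le_of_tendsto_of_tendsto' tendsto_const_nhds hlim0 hmain
  have : T' x - T x = 0 := norm_le_zero_iff.mp this
  exact sub_eq_zero.mp this
end

section
/- Let E be a normed vector space, E' a Banach space, ε > 0, p < 0. If f : E → E' satisfies ‖f(x+y) − f(x) − f(y)‖ ≤ ε(‖x‖^p + ‖y‖^p) for all nonzero x, y ∈ E, then there exists a unique additive mapping T : E → E' such that ‖f(x) − T(x)‖ ≤ (2ε/(2 − 2^p))·‖x‖^p for all nonzero x ∈ E. -/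
open Filter Topology

/-- Rassias's stability theorem for negative exponent `p < 0`, with the
functional inequality assumed only for nonzero vectors. -/
theorem rassias_stability_neg {E E' : Type*}
    [NormedAddCommGroup E] [NormedSpace ℝ E]
    [NormedAddCommGroup E'] [NormedSpace ℝ E'] [CompleteSpace E']
    (f : E → E') (ε p : ℝ) (hε : 0 < ε) (hp : p < 0)
    (hf : ∀ x y : E, x ≠ 0 → y ≠ 0 →
      ‖f (x + y) - f x - f y‖ ≤ ε * (‖x‖ ^ p + ‖y‖ ^ p)) :
    ∃! T : E → E',
      (∀ x y : E, T (x + y) = T x + T y) ∧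
      (∀ x : E, x ≠ 0 → ‖f x - T x‖ ≤ (2 * ε / (2 - (2 : ℝ) ^ p)) * ‖x‖ ^ p) := by
  have h2 : (0:ℝ) < 2 := by norm_num
  set r : ℝ := (2:ℝ) ^ (p - 1) with hr_def
  have hr0 : 0 < r := Real.rpow_pos_of_pos h2 _
  have hr1 : r < 1 := Real.rpow_lt_one_of_one_lt_of_neg (by norm_num) (by linarith)
  set g : E → ℕ → E' := fun x n => ((2:ℝ)⁻¹)^n • f ((2:ℝ)^n • x) with hg_def
  -- key scalar identity
  have hkey : ∀ n : ℕ, ((2:ℝ)⁻¹)^n * ((2:ℝ)^n)^p = r^n := by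
    intro n
    have e1 : ((2:ℝ)^n : ℝ)^p = (2:ℝ) ^ ((n:ℝ)*p) := by
      rw [← Real.rpow_natCast (2:ℝ) n, ← Real.rpow_mul h2.le]
    have e2 : ((2:ℝ)⁻¹)^n = (2:ℝ) ^ (-(n:ℝ)) := by
      rw [← Real.rpow_natCast ((2:ℝ)⁻¹) n, ← Real.rpow_neg_one (2:ℝ),
        ← Real.rpow_mul h2.le, neg_one_mul]
    have e3 : r^n = (2:ℝ) ^ ((p-1)*(n:ℝ)) := by
      rw [hr_def, ← Real.rpow_natCast ((2:ℝ)^(p-1)) n, ← Real.rpow_mul h2.le]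
    rw [e1, e2, e3, ← Real.rpow_add h2]
    ring_nf
  have hsmul_ne : ∀ (x : E), x ≠ 0 → ∀ n : ℕ, (2:ℝ)^n • x ≠ 0 := fun x hx n =>
    smul_ne_zero (pow_ne_zero n two_ne_zero) hx
  have hnorm : ∀ (x : E) (n : ℕ), ‖(2:ℝ)^n • x‖ ^ p = ((2:ℝ)^n)^p * ‖x‖^p := by
    intro x n
    rw [norm_smul, Real.norm_eq_abs, abs_of_pos (pow_pos h2 n),
      Real.mul_rpow (pow_pos h2 n).le (norm_nonneg x)]
  -- step estimate
  have hstep : ∀ (x : E), x ≠ 0 → ∀ n : ℕ,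
      dist (g x n) (g x (n+1)) ≤ (ε * ‖x‖^p) * r^n := by
    intro x hx n
    set z : E := (2:ℝ)^n • x with hz_def
    have hz : z ≠ 0 := hsmul_ne x hx n
    have h1 : ‖f ((2:ℝ)•z) - (2:ℝ)•f z‖ ≤ 2*ε*‖z‖^p := by
      calc ‖f ((2:ℝ)•z) - (2:ℝ)•f z‖ = ‖f (z+z) - f z - f z‖ := by
            rw [two_smul ℝ z, two_smul ℝ (f z), ← sub_sub]
        _ ≤ ε*(‖z‖^p + ‖z‖^p) := hf z z hz hz
        _ = 2*ε*‖z‖^p := by ring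
    have hpow : ((2:ℝ)⁻¹)^(n+1) * 2 = ((2:ℝ)⁻¹)^n := by
      rw [pow_succ]; ring
    have hsplit : ∀ (u v : E'), ((2:ℝ)⁻¹)^n • u - ((2:ℝ)⁻¹)^(n+1) • v
        = ((2:ℝ)⁻¹)^(n+1) • ((2:ℝ) • u - v) := by
      intro u v
      rw [smul_sub, smul_smul, hpow]
    have hdiff : g x n - g x (n+1) = ((2:ℝ)⁻¹)^(n+1) • ((2:ℝ)•f z - f ((2:ℝ)•z)) := by
      have hgn1 : g x (n+1) = ((2:ℝ)⁻¹)^(n+1) • f ((2:ℝ) • z) := by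
        simp only [hg_def, hz_def]
        rw [pow_succ (2:ℝ) n, mul_comm ((2:ℝ)^n) 2, mul_smul]
      have hgn : g x n = ((2:ℝ)⁻¹)^n • f z := rfl
      rw [hgn1, hgn, hsplit]
    rw [dist_eq_norm, hdiff, norm_smul, Real.norm_eq_abs,
      abs_of_pos (pow_pos (by norm_num : (0:ℝ) < 2⁻¹) (n+1)), norm_sub_rev]
    calc ((2:ℝ)⁻¹)^(n+1) * ‖f ((2:ℝ)•z) - (2:ℝ)•f z‖
        ≤ ((2:ℝ)⁻¹)^(n+1) * (2*ε*‖z‖^p) :=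
          mul_le_mul_of_nonneg_left h1 (pow_nonneg (by norm_num) _)
      _ = (ε * ‖x‖^p) * r^n := by
          rw [hz_def, hnorm x n, ← hkey n, pow_succ]; ring
  -- limits exist
  have hgzero : ∀ n : ℕ, g 0 n = ((2:ℝ)⁻¹)^n • f 0 := by
    intro n; simp only [hg_def, smul_zero]
  have hg0lim : Tendsto (g 0) atTop (𝓝 (0:E')) := by
    have h1 := (tendsto_pow_atTop_nhds_zero_of_lt_one (by norm_num : (0:ℝ) ≤ 2⁻¹)
      (by norm_num : (2:ℝ)⁻¹ < 1)).smul_const (f 0)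
    rw [zero_smul] at h1
    exact h1.congr fun n => (hgzero n).symm
  have hlim_ex : ∀ x : E, ∃ l : E', Tendsto (g x) atTop (𝓝 l) := by
    intro x
    rcases eq_or_ne x 0 with h | h
    · subst h
      exact ⟨0, hg0lim⟩
    · exact cauchySeq_tendsto_of_complete
        (cauchySeq_of_le_geometric r (ε * ‖x‖^p) hr1 (hstep x h))
  set T : E → E' := fun x => (hlim_ex x).choose with hT_def
  have hT : ∀ x : E, Tendsto (g x) atTop (𝓝 (T x)) := fun x => (hlim_ex x).choose_spec
  -- T 0 = 0
  have hT0 : T 0 = 0 := tendsto_nhds_unique (hT 0) hg0lim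
  -- geometric tendsto helper
  have hgeo : ∀ C : ℝ, Tendsto (fun n : ℕ => C * r^n) atTop (𝓝 0) := by
    intro C
    simpa using (tendsto_pow_atTop_nhds_zero_of_lt_one hr0.le hr1).const_mul C
  -- additivity
  have hadd : ∀ x y : E, T (x + y) = T x + T y := by
    intro x y
    have hlim1 : Tendsto (fun n => g (x+y) n - (g x n + g y n)) atTop
        (𝓝 (T (x+y) - (T x + T y))) := (hT (x+y)).sub ((hT x).add (hT y))
    have hlim0 : Tendsto (fun n => g (x+y) n - (g x n + g y n)) atTop (𝓝 0) := by
      rcases eq_or_ne x 0 with hx | hx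
      · subst hx
        have heq : ∀ n, g (0+y) n - (g 0 n + g y n) = -(g 0 n) := by
          intro n; rw [zero_add]; abel
        rw [funext heq]
        simpa using hg0lim.neg
      rcases eq_or_ne y 0 with hy | hy
      · subst hy
        have heq : ∀ n, g (x+0) n - (g x n + g 0 n) = -(g 0 n) := by
          intro n; rw [add_zero]; abel
        rw [funext heq]
        simpa using hg0lim.neg
      rcases eq_or_ne (x + y) 0 with hxy | hxy
      · -- y = -x
        have hyx : y = -x := eq_neg_of_add_eq_zero_right hxy
        subst hyx
        refine squeeze_zero_norm (a := fun n => (2*ε*‖x‖^p) * r^n) ?_ (hgeo _)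
        intro n
        set z : E := (2:ℝ)^n • x with hz_def
        have hz : z ≠ 0 := hsmul_ne x hx n
        have hbound : ‖f 0 - (f z + f (-z))‖ ≤ 2*ε*‖z‖^p := by
          have := hf z (-z) hz (neg_ne_zero.2 hz)
          rw [add_neg_cancel, norm_neg] at this
          calc ‖f 0 - (f z + f (-z))‖ = ‖f 0 - f z - f (-z)‖ := by rw [sub_sub]
            _ ≤ ε*(‖z‖^p + ‖z‖^p) := this
            _ = 2*ε*‖z‖^p := by ring
        have heq : g (x + -x) n - (g x n + g (-x) n)
            = ((2:ℝ)⁻¹)^n • (f 0 - (f z + f (-z))) := by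
          have h0 : g (x + -x) n = ((2:ℝ)⁻¹)^n • f 0 := by
            rw [add_neg_cancel, hgzero]
          have h1 : g (-x) n = ((2:ℝ)⁻¹)^n • f (-z) := by
            simp only [hg_def, hz_def, smul_neg]
          have h2' : g x n = ((2:ℝ)⁻¹)^n • f z := rfl
          rw [h0, h1, h2', ← smul_add, ← smul_sub]
        rw [heq, norm_smul, Real.norm_eq_abs,
          abs_of_pos (pow_pos (by norm_num : (0:ℝ) < 2⁻¹) n)]
        calc ((2:ℝ)⁻¹)^n * ‖f 0 - (f z + f (-z))‖
            ≤ ((2:ℝ)⁻¹)^n * (2*ε*‖z‖^p) :=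
              mul_le_mul_of_nonneg_left hbound (pow_nonneg (by norm_num) _)
          _ = (2*ε*‖x‖^p) * r^n := by
              rw [hz_def, hnorm x n, ← hkey n]; ring
      · -- generic case
        refine squeeze_zero_norm (a := fun n => (ε*(‖x‖^p+‖y‖^p)) * r^n) ?_ (hgeo _)
        intro n
        have hzx : (2:ℝ)^n • x ≠ 0 := hsmul_ne x hx n
        have hzy : (2:ℝ)^n • y ≠ 0 := hsmul_ne y hy n
        have hb := hf ((2:ℝ)^n • x) ((2:ℝ)^n • y) hzx hzy
        have heq : g (x + y) n - (g x n + g y n)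
            = ((2:ℝ)⁻¹)^n • (f ((2:ℝ)^n • x + (2:ℝ)^n • y)
              - f ((2:ℝ)^n • x) - f ((2:ℝ)^n • y)) := by
          simp only [hg_def, smul_add, smul_sub]
          abel
        rw [heq, norm_smul, Real.norm_eq_abs,
          abs_of_pos (pow_pos (by norm_num : (0:ℝ) < 2⁻¹) n)]
        calc ((2:ℝ)⁻¹)^n * ‖f ((2:ℝ)^n • x + (2:ℝ)^n • y)
              - f ((2:ℝ)^n • x) - f ((2:ℝ)^n • y)‖
            ≤ ((2:ℝ)⁻¹)^n * (ε * (‖(2:ℝ)^n • x‖^p + ‖(2:ℝ)^n • y‖^p)) :=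
              mul_le_mul_of_nonneg_left hb (pow_nonneg (by norm_num) _)
          _ = (ε*(‖x‖^p+‖y‖^p)) * r^n := by
              rw [hnorm x n, hnorm y n, ← hkey n]; ring
    have := tendsto_nhds_unique hlim1 hlim0
    have h := sub_eq_zero.mp this
    exact h
  -- the main estimate
  have hC : (0:ℝ) < 2 - (2:ℝ)^p := by
    have : (2:ℝ)^p < 1 := Real.rpow_lt_one_of_one_lt_of_neg (by norm_num) hp
    linarith
  have h1r : 1 - r = (2 - (2:ℝ)^p) / 2 := by
    have : r = (2:ℝ)^p / 2 := by
      rw [hr_def, Real.rpow_sub h2, Real.rpow_one]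
    rw [this]; ring
  have hest : ∀ x : E, x ≠ 0 → ‖f x - T x‖ ≤ (2 * ε / (2 - (2:ℝ)^p)) * ‖x‖^p := by
    intro x hx
    have := dist_le_of_le_geometric_of_tendsto₀ r (ε * ‖x‖^p) hr1 (hstep x hx) (hT x)
    have hg0 : g x 0 = f x := by simp [hg_def]
    rw [hg0, dist_eq_norm] at this
    calc ‖f x - T x‖ ≤ ε * ‖x‖^p / (1 - r) := this
      _ = (2 * ε / (2 - (2:ℝ)^p)) * ‖x‖^p := by
          rw [h1r]; field_simp
  refine ⟨T, ⟨hadd, hest⟩, ?_⟩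
  rintro T' ⟨hT'add, hT'est⟩
  -- uniqueness
  set Tm : E →+ E' := AddMonoidHom.mk' T hadd with hTm_def
  set Tm' : E →+ E' := AddMonoidHom.mk' T' hT'add with hTm'_def
  funext x
  rcases eq_or_ne x 0 with hx | hx
  · subst hx
    rw [hT0, show T' 0 = Tm' 0 from rfl, map_zero]
  · have hr'0 : (0:ℝ) ≤ (2:ℝ)^p := (Real.rpow_pos_of_pos h2 p).le
    have hr'1 : (2:ℝ)^p < 1 := Real.rpow_lt_one_of_one_lt_of_neg (by norm_num) hp
    set C : ℝ := 2 * ε / (2 - (2:ℝ)^p) with hC_def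
    have hkey' : ∀ n : ℕ, ‖T' x - T x‖ ≤ (2*C*‖x‖^p) * ((2:ℝ)^p)^n := by
      intro n
      set z : E := (2:ℝ)^n • x with hz_def
      have hz : z ≠ 0 := hsmul_ne x hx n
      have hzsmul : z = ((2:ℕ)^n : ℕ) • x := by
        rw [hz_def, ← Nat.cast_smul_eq_nsmul ℝ]
        push_cast
        ring_nf
      have hTz : T z = ((2:ℕ)^n : ℕ) • T x := by
        rw [hzsmul, show ∀ w, T w = Tm w from fun _ => rfl, map_nsmul]; rfl
      have hT'z : T' z = ((2:ℕ)^n : ℕ) • T' x := by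
        rw [hzsmul, show ∀ w, T' w = Tm' w from fun _ => rfl, map_nsmul]; rfl
      have hb : ‖T' z - T z‖ ≤ 2*C*‖z‖^p := by
        calc ‖T' z - T z‖ = ‖(f z - T z) - (f z - T' z)‖ := by abel_nf
          _ ≤ ‖f z - T z‖ + ‖f z - T' z‖ := norm_sub_le _ _
          _ ≤ C*‖z‖^p + C*‖z‖^p := add_le_add (hest z hz) (hT'est z hz)
          _ = 2*C*‖z‖^p := by ring
      have hnz : ‖T' z - T z‖ = (2:ℝ)^n * ‖T' x - T x‖ := by
        rw [hTz, hT'z, ← smul_sub, ← Nat.cast_smul_eq_nsmul ℝ, norm_smul,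
          Real.norm_eq_abs]
        push_cast
        rw [abs_of_pos (pow_pos h2 n)]
      have hpos : (0:ℝ) < (2:ℝ)^n := pow_pos h2 n
      rw [hnz] at hb
      rw [hz_def, hnorm x n] at hb
      have h2np : ((2:ℝ)^n)^p = ((2:ℝ)^p)^n := by
        rw [← Real.rpow_natCast (2:ℝ) n, ← Real.rpow_mul h2.le,
          mul_comm, Real.rpow_mul h2.le, Real.rpow_natCast]
      rw [h2np] at hb
      have hC0 : (0:ℝ) ≤ C := le_of_lt (div_pos (by linarith) hC)
      rw [← mul_le_mul_iff_right₀ hpos]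
      have h1 : (1:ℝ) ≤ (2:ℝ)^n := one_le_pow₀ (by norm_num : (1:ℝ) ≤ 2)
      have hq : (0:ℝ) ≤ ((2:ℝ)^n - 1) * (2*C*(((2:ℝ)^p)^n * ‖x‖^p)) :=
        mul_nonneg (by linarith)
          (mul_nonneg (by linarith)
            (mul_nonneg (pow_nonneg hr'0 n) (Real.rpow_nonneg (norm_nonneg x) p)))
      calc (2:ℝ)^n * ‖T' x - T x‖ ≤ 2*C*(((2:ℝ)^p)^n * ‖x‖^p) := hb
        _ ≤ (2:ℝ)^n * ((2*C*‖x‖^p) * ((2:ℝ)^p)^n) := by linarith [hq]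
    have htend : Tendsto (fun n : ℕ => (2*C*‖x‖^p) * ((2:ℝ)^p)^n) atTop (𝓝 0) := by
      simpa using (tendsto_pow_atTop_nhds_zero_of_lt_one hr'0 hr'1).const_mul
        (2*C*‖x‖^p)
    have : ‖T' x - T x‖ ≤ 0 := ge_of_tendsto' htend hkey'
    have := le_antisymm this (norm_nonneg _)
    rwa [norm_eq_zero, sub_eq_zero] at this
end

section
/- Let A be a normed space over ℂ and X a Banach space. Suppose D : A → X satisfies D((x+y+z)/3) + D((x−2y+z)/3) + D((x+y−2z)/3) = D(x) for all x, y, z ∈ A. Then D is additive: D(w+t+s) = D(w) + D(t) + D(s) for all w, t, s ∈ A, and in particular D(a+b) = D(a)+D(b) for all a, b ∈ A. -/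
/-- A solution of the generalized Jensen-type equation is additive. -/
theorem jensen_type_additive {A X : Type*}
    [NormedAddCommGroup A] [NormedSpace ℂ A]
    [NormedAddCommGroup X] [NormedSpace ℂ X] [CompleteSpace X]
    (D : A → X)
    (hD : ∀ x y z : A,
      D (((3 : ℂ)⁻¹) • (x + y + z)) + D (((3 : ℂ)⁻¹) • (x - 2 • y + z)) +
        D (((3 : ℂ)⁻¹) • (x + y - 2 • z)) = D x) :
    (∀ w t s : A, D (w + t + s) = D w + D t + D s) ∧
    (∀ a b : A, D (a + b) = D a + D b) := by
  have h1 : ∀ w t s : A, D (w + t + s) = D w + D t + D s := by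
    intro w t s
    have h := hD (w + t + s) (w - t) (w - s)
    have e1 : ((3 : ℂ)⁻¹) • ((w + t + s) + (w - t) + (w - s)) = w := by
      match_scalars <;> norm_num
    have e2 : ((3 : ℂ)⁻¹) • ((w + t + s) - 2 • (w - t) + (w - s)) = t := by
      match_scalars <;> norm_num
    have e3 : ((3 : ℂ)⁻¹) • ((w + t + s) + (w - t) - 2 • (w - s)) = s := by
      match_scalars <;> norm_num
    rw [e1, e2, e3] at h
    exact h.symm
  refine ⟨h1, fun a b => ?_⟩
  have h0 : D 0 = 0 := by
    have h := h1 0 0 0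
    simp only [add_zero] at h
    have h2 : D 0 + D 0 = 0 := by
      have h3 : D 0 + D 0 + D 0 = 0 + D 0 := by rw [zero_add]; exact h.symm
      exact add_right_cancel h3
    have h4 : (2 : ℂ) • D 0 = 0 := by rw [two_smul]; exact h2
    rcases smul_eq_zero.mp h4 with h5 | h5
    · exact absurd h5 (by norm_num)
    · exact h5
  have := h1 a b 0
  simp [h0] at this
  simpa [h0] using this
end

section
/- Let A be a normed ℂ-vector space and X a complex Banach space. Let f : A → X and φ : A³ → [0,∞) satisfy ‖μ f((x+y+z)/3) + μ f((x−2y+z)/3) + μ f((x+y−2z)/3) − f(μx)‖ ≤ φ(x,y,z) for all x,y,z ∈ A and all μ in the unit circle 𝕋 ⊆ ℂ. Suppose there exists L < 1 with φ(x,y,z) ≤ 3L·φ(x/3, y/3, z/3) for all x,y,z. Then there exists a unique additive function D : A → X with D(μx) = μD(x) for all μ ∈ 𝕋 and all x ∈ A, such that ‖f(x) − D(x)‖ ≤ (L/(1−L))·φ(x,0,0) for all x ∈ A. Moreover D(x) = lim_{n→∞} f(3ⁿx)/3ⁿ. -/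
open Filter

theorem aux_jensen {A X : Type*}
    [NormedAddCommGroup A] [NormedSpace ℂ A]
    [NormedAddCommGroup X] [NormedSpace ℂ X] [CompleteSpace X]
    (f : A → X) (φ : A → A → A → ℝ) (hφ : ∀ x y z, 0 ≤ φ x y z)
    (hf : ∀ (μ : ℂ), ‖μ‖ = 1 → ∀ x y z : A,
      ‖μ • f (((3 : ℂ)⁻¹) • (x + y + z)) + μ • f (((3 : ℂ)⁻¹) • (x - 2 • y + z)) +
          μ • f (((3 : ℂ)⁻¹) • (x + y - 2 • z)) - f (μ • x)‖ ≤ φ x y z)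
    (L : ℝ) (hL0 : 0 ≤ L) (hL : L < 1)
    (hcontr : ∀ x y z : A,
      φ x y z ≤ 3 * L * φ (((3 : ℂ)⁻¹) • x) (((3 : ℂ)⁻¹) • y) (((3 : ℂ)⁻¹) • z)) :
    ∃! D : A → X,
      (∀ a b : A, D (a + b) = D a + D b) ∧
      (∀ (μ : ℂ), ‖μ‖ = 1 → ∀ x : A, D (μ • x) = μ • D x) ∧
      (∀ x : A, ‖f x - D x‖ ≤ (L / (1 - L)) * φ x 0 0) ∧
      (∀ x : A, Filter.Tendsto (fun n : ℕ => ((3 : ℂ) ^ n)⁻¹ • f ((3 : ℂ) ^ n • x))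
        Filter.atTop (nhds (D x))) := by
  have h3 : (3:ℂ) ≠ 0 := by norm_num
  set g : ℕ → A → X := fun n x => ((3 : ℂ) ^ n)⁻¹ • f ((3 : ℂ) ^ n • x) with hg
  -- scaling bound for φ
  have phibound : ∀ (n : ℕ) (x y z : A),
      φ ((3:ℂ)^n • x) ((3:ℂ)^n • y) ((3:ℂ)^n • z) ≤ (3*L)^n * φ x y z := by
    intro n
    induction n with
    | zero => intro x y z; simp
    | succ n ih =>
      intro x y z
      have h1 := hcontr ((3:ℂ)^(n+1) • x) ((3:ℂ)^(n+1) • y) ((3:ℂ)^(n+1) • z)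
      have hs : ∀ a : A, (3:ℂ)⁻¹ • ((3:ℂ)^(n+1) • a) = (3:ℂ)^n • a := by
        intro a
        rw [smul_smul]
        congr 1
        field_simp [pow_succ]
        ring
      rw [hs, hs, hs] at h1
      calc φ ((3:ℂ)^(n+1) • x) ((3:ℂ)^(n+1) • y) ((3:ℂ)^(n+1) • z)
          ≤ 3 * L * φ ((3:ℂ)^n • x) ((3:ℂ)^n • y) ((3:ℂ)^n • z) := h1
        _ ≤ 3 * L * ((3*L)^n * φ x y z) := by
            apply mul_le_mul_of_nonneg_left (ih x y z) (by positivity)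
        _ = (3*L)^(n+1) * φ x y z := by ring
  -- one-step estimate
  have hstep : ∀ x : A, ‖f x - (3:ℂ)⁻¹ • f ((3:ℂ) • x)‖ ≤ L * φ x 0 0 := by
    intro x
    have h1 := hf 1 (by simp) ((3:ℂ) • x) 0 0
    have h2 := hcontr ((3:ℂ) • x) 0 0
    have hx : (3:ℂ)⁻¹ • ((3:ℂ) • x) = x := by
      rw [smul_smul, inv_mul_cancel₀ h3, one_smul]
    simp only [smul_zero, add_zero, sub_zero, one_smul, hx] at h1 h2
    have h1' : ‖f x + f x + f x - f ((3:ℂ) • x)‖ ≤ 3 * L * φ x 0 0 := le_trans h1 h2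
    have heq : f x - (3:ℂ)⁻¹ • f ((3:ℂ) • x)
        = (3:ℂ)⁻¹ • (f x + f x + f x - f ((3:ℂ) • x)) := by
      rw [smul_sub]
      congr 1
      match_scalars
      norm_num
    rw [heq, norm_smul]
    have : ‖(3:ℂ)⁻¹‖ = 3⁻¹ := by
      rw [norm_inv]; norm_num
    rw [this]
    calc (3:ℝ)⁻¹ * ‖f x + f x + f x - f ((3:ℂ) • x)‖
        ≤ (3:ℝ)⁻¹ * (3 * L * φ x 0 0) := by
          apply mul_le_mul_of_nonneg_left h1' (by norm_num)
      _ = L * φ x 0 0 := by ring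
  -- consecutive differences
  have hdist : ∀ (x : A) (n : ℕ), dist (g n x) (g (n+1) x) ≤ (L * φ x 0 0) * L ^ n := by
    intro x n
    have key : g n x - g (n+1) x
        = ((3:ℂ)^n)⁻¹ • (f ((3:ℂ)^n • x) - (3:ℂ)⁻¹ • f ((3:ℂ) • ((3:ℂ)^n • x))) := by
      have e1 : (3:ℂ) • ((3:ℂ)^n • x) = (3:ℂ)^(n+1) • x := by
        rw [smul_smul, ← pow_succ']
      simp only [hg]
      rw [e1, smul_sub, smul_smul, ← mul_inv, ← pow_succ]
    rw [dist_eq_norm, key, norm_smul]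
    have hn3 : ‖((3:ℂ)^n)⁻¹‖ = ((3:ℝ)^n)⁻¹ := by
      rw [norm_inv, norm_pow]; norm_num
    rw [hn3]
    calc ((3:ℝ)^n)⁻¹ * ‖f ((3:ℂ)^n • x) - (3:ℂ)⁻¹ • f ((3:ℂ) • ((3:ℂ)^n • x))‖
        ≤ ((3:ℝ)^n)⁻¹ * (L * φ ((3:ℂ)^n • x) 0 0) := by
          apply mul_le_mul_of_nonneg_left (hstep _) (by positivity)
      _ ≤ ((3:ℝ)^n)⁻¹ * (L * ((3*L)^n * φ x 0 0)) := by
          apply mul_le_mul_of_nonneg_left _ (by positivity)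
          apply mul_le_mul_of_nonneg_left _ hL0
          have := phibound n x 0 0
          simpa using this
      _ = (L * φ x 0 0) * L ^ n := by
          rw [mul_pow]
          field_simp
  -- Cauchy and limit
  have hcauchy : ∀ x : A, CauchySeq (fun n => g n x) := by
    intro x
    exact cauchySeq_of_le_geometric L (L * φ x 0 0) hL (hdist x)
  have hDex : ∀ x : A, ∃ l : X, Tendsto (fun n => g n x) atTop (nhds l) :=
    fun x => cauchySeq_tendsto_of_complete (hcauchy x)
  choose D hD using hDex
  -- the general Jensen equation for D, in the limit
  have hLpow : Tendsto (fun n : ℕ => L ^ n) atTop (nhds 0) :=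
    tendsto_pow_atTop_nhds_zero_of_lt_one hL0 hL
  have hDeq : ∀ x y z : A,
      D ((3:ℂ)⁻¹ • (x + y + z)) + D ((3:ℂ)⁻¹ • (x - 2 • y + z)) +
        D ((3:ℂ)⁻¹ • (x + y - 2 • z)) = D x := by
    intro x y z
    set u := (3:ℂ)⁻¹ • (x + y + z)
    set v := (3:ℂ)⁻¹ • (x - 2 • y + z)
    set w := (3:ℂ)⁻¹ • (x + y - 2 • z)
    have hnorm : ∀ n : ℕ, ‖g n u + g n v + g n w - g n x‖ ≤ φ x y z * L ^ n := by
      intro n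
      have key : g n u + g n v + g n w - g n x
          = ((3:ℂ)^n)⁻¹ • ((1:ℂ) • f ((3:ℂ)^n • u) + (1:ℂ) • f ((3:ℂ)^n • v) +
              (1:ℂ) • f ((3:ℂ)^n • w) - f ((1:ℂ) • ((3:ℂ)^n • x))) := by
        simp only [one_smul, hg, smul_add, smul_sub]
      have hu : (3:ℂ)^n • u = (3:ℂ)⁻¹ • ((3:ℂ)^n • x + (3:ℂ)^n • y + (3:ℂ)^n • z) := by
        simp only [u]; module
      have hv : (3:ℂ)^n • v
          = (3:ℂ)⁻¹ • ((3:ℂ)^n • x - 2 • ((3:ℂ)^n • y) + (3:ℂ)^n • z) := by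
        simp only [v]; module
      have hw : (3:ℂ)^n • w
          = (3:ℂ)⁻¹ • ((3:ℂ)^n • x + (3:ℂ)^n • y - 2 • ((3:ℂ)^n • z)) := by
        simp only [w]; module
      have hfn := hf 1 (by simp) ((3:ℂ)^n • x) ((3:ℂ)^n • y) ((3:ℂ)^n • z)
      rw [← hu, ← hv, ← hw] at hfn
      rw [key, norm_smul]
      have hn3 : ‖((3:ℂ)^n)⁻¹‖ = ((3:ℝ)^n)⁻¹ := by
        rw [norm_inv, norm_pow]; norm_num
      rw [hn3]
      calc ((3:ℝ)^n)⁻¹ * ‖(1:ℂ) • f ((3:ℂ)^n • u) + (1:ℂ) • f ((3:ℂ)^n • v) +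
              (1:ℂ) • f ((3:ℂ)^n • w) - f ((1:ℂ) • ((3:ℂ)^n • x))‖
          ≤ ((3:ℝ)^n)⁻¹ * φ ((3:ℂ)^n • x) ((3:ℂ)^n • y) ((3:ℂ)^n • z) := by
            apply mul_le_mul_of_nonneg_left hfn (by positivity)
        _ ≤ ((3:ℝ)^n)⁻¹ * ((3*L)^n * φ x y z) := by
            apply mul_le_mul_of_nonneg_left (phibound n x y z) (by positivity)
        _ = φ x y z * L ^ n := by
            rw [mul_pow]; field_simp
    have htend : Tendsto (fun n => g n u + g n v + g n w - g n x) atTop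
        (nhds (D u + D v + D w - D x)) :=
      (((hD u).add (hD v)).add (hD w)).sub (hD x)
    have hzero : Tendsto (fun n : ℕ => φ x y z * L ^ n) atTop (nhds 0) := by
      simpa using hLpow.const_mul (φ x y z)
    have : ‖D u + D v + D w - D x‖ = 0 := by
      have h1 : Tendsto (fun n => ‖g n u + g n v + g n w - g n x‖) atTop
          (nhds ‖D u + D v + D w - D x‖) := htend.norm
      have h2 : Tendsto (fun n => ‖g n u + g n v + g n w - g n x‖) atTop (nhds 0) := by
        apply squeeze_zero (fun n => norm_nonneg _) hnorm hzero
      exact tendsto_nhds_unique h1 h2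
    exact sub_eq_zero.mp (norm_eq_zero.mp this)
  -- D 0 = 0
  have hD0 : D 0 = 0 := by
    have h := hDeq 0 0 0
    simp only [add_zero, zero_add, smul_zero, sub_zero, zero_sub, neg_zero] at h
    have h2 : D 0 + D 0 = 0 := add_right_cancel (h.trans (zero_add (D 0)).symm)
    have h3 : (2:ℂ) • D 0 = 0 := by rw [two_smul]; exact h2
    rcases smul_eq_zero.mp h3 with h | h
    · norm_num at h
    · exact h
  -- additivity
  have hadd : ∀ a b : A, D (a + b) = D a + D b := by
    intro a b
    have h := hDeq (a + b) (a - b) a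
    have e1 : (3:ℂ)⁻¹ • ((a + b) + (a - b) + a) = a := by module
    have e2 : (3:ℂ)⁻¹ • ((a + b) - 2 • (a - b) + a) = b := by module
    have e3 : (3:ℂ)⁻¹ • ((a + b) + (a - b) - 2 • a) = 0 := by module
    rw [e1, e2, e3, hD0, add_zero] at h
    exact h.symm
  -- T-homogeneity
  have hhom : ∀ (μ : ℂ), ‖μ‖ = 1 → ∀ x : A, D (μ • x) = μ • D x := by
    intro μ hμ x
    have hnorm : ∀ n : ℕ, ‖μ • g n x - g (n+1) (μ • x)‖ ≤ φ x 0 0 * L ^ (n+1) := by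
      intro n
      have hfn := hf μ hμ ((3:ℂ)^(n+1) • x) 0 0
      have hs : (3:ℂ)⁻¹ • ((3:ℂ)^(n+1) • x) = (3:ℂ)^n • x := by
        rw [smul_smul]
        congr 1
        field_simp [pow_succ]
        ring
      simp only [smul_zero, add_zero, sub_zero, hs] at hfn
      have key : μ • g n x - g (n+1) (μ • x)
          = ((3:ℂ)^(n+1))⁻¹ • (μ • f ((3:ℂ)^n • x) + μ • f ((3:ℂ)^n • x) +
              μ • f ((3:ℂ)^n • x) - f (μ • ((3:ℂ)^(n+1) • x))) := by
        have e1 : (3:ℂ)^(n+1) • (μ • x) = μ • ((3:ℂ)^(n+1) • x) := smul_comm _ _ _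
        simp only [hg, e1]
        match_scalars
        · field_simp [pow_succ]
          ring
        · ring
      rw [key, norm_smul]
      have hn3 : ‖((3:ℂ)^(n+1))⁻¹‖ = ((3:ℝ)^(n+1))⁻¹ := by
        rw [norm_inv, norm_pow]; norm_num
      rw [hn3]
      calc ((3:ℝ)^(n+1))⁻¹ * ‖μ • f ((3:ℂ)^n • x) + μ • f ((3:ℂ)^n • x) +
              μ • f ((3:ℂ)^n • x) - f (μ • ((3:ℂ)^(n+1) • x))‖
          ≤ ((3:ℝ)^(n+1))⁻¹ * φ ((3:ℂ)^(n+1) • x) 0 0 := by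
            apply mul_le_mul_of_nonneg_left hfn (by positivity)
        _ ≤ ((3:ℝ)^(n+1))⁻¹ * ((3*L)^(n+1) * φ x 0 0) := by
            apply mul_le_mul_of_nonneg_left _ (by positivity)
            simpa using phibound (n+1) x 0 0
        _ = φ x 0 0 * L ^ (n+1) := by
            rw [mul_pow]; field_simp
    have htend : Tendsto (fun n => μ • g n x - g (n+1) (μ • x)) atTop
        (nhds (μ • D x - D (μ • x))) := by
      have t1 : Tendsto (fun n => μ • g n x) atTop (nhds (μ • D x)) :=
        (hD x).const_smul μ
      have t2 : Tendsto (fun n => g (n+1) (μ • x)) atTop (nhds (D (μ • x))) :=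
        (hD (μ • x)).comp (tendsto_add_atTop_nat 1)
      exact t1.sub t2
    have hzero : Tendsto (fun n : ℕ => φ x 0 0 * L ^ (n+1)) atTop (nhds 0) := by
      have := (hLpow.const_mul (φ x 0 0)).comp (tendsto_add_atTop_nat 1)
      rw [mul_zero] at this; exact this
    have hz : ‖μ • D x - D (μ • x)‖ = 0 := by
      have h1 := htend.norm
      have h2 : Tendsto (fun n => ‖μ • g n x - g (n+1) (μ • x)‖) atTop (nhds 0) :=
        squeeze_zero (fun n => norm_nonneg _) hnorm hzero
      exact tendsto_nhds_unique h1 h2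
    exact (sub_eq_zero.mp (norm_eq_zero.mp hz)).symm
  -- the error bound
  have hbound : ∀ x : A, ‖f x - D x‖ ≤ (L / (1 - L)) * φ x 0 0 := by
    intro x
    have h := dist_le_of_le_geometric_of_tendsto₀ L (L * φ x 0 0) hL (hdist x) (hD x)
    have hg0 : g 0 x = f x := by simp [hg]
    rw [hg0, dist_eq_norm] at h
    have : L * φ x 0 0 / (1 - L) = (L / (1 - L)) * φ x 0 0 := by ring
    linarith
  refine ⟨D, ⟨hadd, hhom, hbound, hD⟩, ?_⟩
  rintro D' ⟨-, -, -, h4⟩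
  funext x
  exact tendsto_nhds_unique (h4 x) (hD x)

/-- Stability of the generalized Jensen-type equation with unit-circle
parameter: existence of a unique additive, `𝕋`-homogeneous approximant. -/
theorem jensen_type_stability {A X : Type*}
    [NormedAddCommGroup A] [NormedSpace ℂ A]
    [NormedAddCommGroup X] [NormedSpace ℂ X] [CompleteSpace X]
    (f : A → X) (φ : A → A → A → ℝ) (hφ : ∀ x y z, 0 ≤ φ x y z)
    (hf : ∀ (μ : ℂ), ‖μ‖ = 1 → ∀ x y z : A,
      ‖μ • f (((3 : ℂ)⁻¹) • (x + y + z)) + μ • f (((3 : ℂ)⁻¹) • (x - 2 • y + z)) +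
          μ • f (((3 : ℂ)⁻¹) • (x + y - 2 • z)) - f (μ • x)‖ ≤ φ x y z)
    (L : ℝ) (hL : L < 1)
    (hcontr : ∀ x y z : A,
      φ x y z ≤ 3 * L * φ (((3 : ℂ)⁻¹) • x) (((3 : ℂ)⁻¹) • y) (((3 : ℂ)⁻¹) • z)) :
    ∃! D : A → X,
      (∀ a b : A, D (a + b) = D a + D b) ∧
      (∀ (μ : ℂ), ‖μ‖ = 1 → ∀ x : A, D (μ • x) = μ • D x) ∧
      (∀ x : A, ‖f x - D x‖ ≤ (L / (1 - L)) * φ x 0 0) ∧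
      (∀ x : A, Filter.Tendsto (fun n : ℕ => ((3 : ℂ) ^ n)⁻¹ • f ((3 : ℂ) ^ n • x))
        Filter.atTop (nhds (D x))) := by
  rcases le_or_gt 0 L with hL0 | hLneg
  · exact aux_jensen f φ hφ hf L hL0 hL hcontr
  · -- if L < 0, then φ vanishes identically
    have hφ0 : ∀ x y z, φ x y z = 0 := by
      intro x y z
      have h1 := hcontr x y z
      have h2 := hφ ((3:ℂ)⁻¹ • x) ((3:ℂ)⁻¹ • y) ((3:ℂ)⁻¹ • z)
      have h3 : 3 * L * φ ((3:ℂ)⁻¹ • x) ((3:ℂ)⁻¹ • y) ((3:ℂ)⁻¹ • z) ≤ 0 :=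
        mul_nonpos_of_nonpos_of_nonneg (by linarith) h2
      exact le_antisymm (h1.trans h3) (hφ x y z)
    obtain ⟨D, hDp, huniq⟩ :=
      aux_jensen f φ hφ hf 0 le_rfl one_pos
        (fun x y z => by rw [hφ0, hφ0]; norm_num)
    refine ⟨D, ⟨hDp.1, hDp.2.1, ?_, hDp.2.2.2⟩, ?_⟩
    · intro x
      have := hDp.2.2.1 x
      rw [hφ0] at this ⊢
      simpa using this
    · rintro D' ⟨ha, hb, hc, hd⟩
      exact huniq D' ⟨ha, hb, fun x => by have h := hc x; rw [hφ0] at h ⊢; simpa using h, hd⟩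
end

section
/- Let A be a normed space, X a Banach space, f : A → X, φ : A → [0,∞), and L < 1 with φ(x) ≤ 3L·φ(x/3) for all x. If ‖3f(x/3) − f(x)‖ ≤ φ(x) for all x ∈ A, then ‖(1/3)f(3x) − f(x)‖ ≤ L·φ(x) for all x ∈ A, and the sequence (f(3ⁿx)/3ⁿ) is Cauchy for each x; its limit D(x) satisfies ‖f(x) − D(x)‖ ≤ (L/(1−L))·φ(x) and D(3x) = 3D(x). -/
open Filter

theorem ascending_iteration_aux {A X : Type*}
    [NormedAddCommGroup A] [NormedSpace ℝ A]
    [NormedAddCommGroup X] [NormedSpace ℝ X] [CompleteSpace X]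
    (f : A → X) (φ : A → ℝ) (hφ : ∀ x, 0 ≤ φ x)
    (L : ℝ) (hL : L < 1) (hL0 : 0 ≤ L)
    (hcontr : ∀ x : A, φ x ≤ 3 * L * φ (((3 : ℝ)⁻¹) • x))
    (hf : ∀ x : A, ‖(3 : ℝ) • f (((3 : ℝ)⁻¹) • x) - f x‖ ≤ φ x) :
    (∀ x : A, ‖((3 : ℝ)⁻¹) • f ((3 : ℝ) • x) - f x‖ ≤ L * φ x) ∧
    (∀ x : A, CauchySeq (fun n : ℕ => ((3 : ℝ) ^ n)⁻¹ • f ((3 : ℝ) ^ n • x))) ∧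
    ∃ D : A → X,
      (∀ x : A, Filter.Tendsto (fun n : ℕ => ((3 : ℝ) ^ n)⁻¹ • f ((3 : ℝ) ^ n • x))
        Filter.atTop (nhds (D x))) ∧
      (∀ x : A, ‖f x - D x‖ ≤ (L / (1 - L)) * φ x) ∧
      (∀ x : A, D ((3 : ℝ) • x) = (3 : ℝ) • D x) := by
  have h3 : (3 : ℝ) ≠ 0 := by norm_num
  have claim1 : ∀ x : A, ‖((3 : ℝ)⁻¹) • f ((3 : ℝ) • x) - f x‖ ≤ L * φ x := by
    intro x
    have h1 := hf ((3 : ℝ) • x)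
    have h2 := hcontr ((3 : ℝ) • x)
    rw [inv_smul_smul₀ h3] at h1 h2
    have hkey : ((3 : ℝ)⁻¹) • f ((3 : ℝ) • x) - f x
        = -(((3 : ℝ)⁻¹) • ((3 : ℝ) • f x - f ((3 : ℝ) • x))) := by
      rw [smul_sub, smul_smul]
      norm_num
    rw [hkey, norm_neg, norm_smul]
    have hn : ‖(3 : ℝ)⁻¹‖ = 3⁻¹ := by norm_num
    rw [hn]
    nlinarith [norm_nonneg ((3 : ℝ) • f x - f ((3 : ℝ) • x)), hφ x]
  set g : A → ℕ → X := fun x n => ((3 : ℝ) ^ n)⁻¹ • f ((3 : ℝ) ^ n • x) with hg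
  have hphi : ∀ (x : A) (n : ℕ), φ ((3 : ℝ) ^ n • x) ≤ (3 * L) ^ n * φ x := by
    intro x n
    induction n with
    | zero => simp
    | succ n ih =>
      have h2 := hcontr ((3 : ℝ) ^ (n + 1) • x)
      have he : ((3 : ℝ)⁻¹) • ((3 : ℝ) ^ (n + 1) • x) = (3 : ℝ) ^ n • x := by
        rw [smul_smul]
        congr 1
        field_simp
        ring
      rw [he] at h2
      calc φ ((3 : ℝ) ^ (n + 1) • x) ≤ 3 * L * φ ((3 : ℝ) ^ n • x) := h2
        _ ≤ 3 * L * ((3 * L) ^ n * φ x) := by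
            apply mul_le_mul_of_nonneg_left ih (by positivity)
        _ = (3 * L) ^ (n + 1) * φ x := by ring
  have hstep : ∀ (x : A) (n : ℕ), dist (g x n) (g x (n + 1)) ≤ (L * φ x) * L ^ n := by
    intro x n
    have h := claim1 ((3 : ℝ) ^ n • x)
    have hp : (0 : ℝ) < (3 : ℝ) ^ n := by positivity
    have key : g x n - g x (n + 1)
        = -(((3 : ℝ) ^ n)⁻¹ • (((3 : ℝ)⁻¹) • f ((3 : ℝ) • ((3 : ℝ) ^ n • x))
            - f ((3 : ℝ) ^ n • x))) := by
      simp only [hg]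
      rw [smul_sub, smul_smul, smul_smul, neg_sub]
      congr 2
      · rw [pow_succ]
        field_simp
      · congr 1
        rw [pow_succ]
        ring
    rw [dist_eq_norm, key, norm_neg, norm_smul, norm_inv, norm_pow]
    have hn3 : ‖(3 : ℝ)‖ = 3 := by norm_num
    rw [hn3]
    have h2 := hphi x n
    calc ((3 : ℝ) ^ n)⁻¹ * ‖((3 : ℝ)⁻¹) • f ((3 : ℝ) • ((3 : ℝ) ^ n • x))
            - f ((3 : ℝ) ^ n • x)‖
        ≤ ((3 : ℝ) ^ n)⁻¹ * (L * φ ((3 : ℝ) ^ n • x)) := by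
          apply mul_le_mul_of_nonneg_left h (by positivity)
      _ ≤ ((3 : ℝ) ^ n)⁻¹ * (L * ((3 * L) ^ n * φ x)) := by
          apply mul_le_mul_of_nonneg_left _ (by positivity)
          exact mul_le_mul_of_nonneg_left h2 hL0
      _ = (L * φ x) * L ^ n := by
          rw [mul_pow]
          field_simp
  have hcauchy : ∀ x : A, CauchySeq (g x) := fun x =>
    cauchySeq_of_le_geometric L (L * φ x) hL (hstep x)
  refine ⟨claim1, hcauchy, fun x => limUnder atTop (g x), fun x => (hcauchy x).tendsto_limUnder,
    ?_, ?_⟩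
  · intro x
    have hb := dist_le_of_le_geometric_of_tendsto₀ L (L * φ x) hL (hstep x)
      (hcauchy x).tendsto_limUnder
    have hg0 : g x 0 = f x := by simp [hg]
    rw [hg0, dist_eq_norm] at hb
    calc ‖f x - limUnder atTop (g x)‖ ≤ L * φ x / (1 - L) := hb
      _ = L / (1 - L) * φ x := by ring
  · intro x
    have h1 : Tendsto (g ((3 : ℝ) • x)) atTop (nhds (limUnder atTop (g ((3 : ℝ) • x)))) :=
      (hcauchy _).tendsto_limUnder
    have h2 : g ((3 : ℝ) • x) = fun n => (3 : ℝ) • g x (n + 1) := by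
      funext n
      have e1 : (3 : ℝ) ^ n * 3 = 3 ^ (n + 1) := (pow_succ 3 n).symm
      have e2 : ((3 : ℝ) ^ n)⁻¹ = 3 * ((3 : ℝ) ^ (n + 1))⁻¹ := by
        rw [pow_succ]
        field_simp
      simp only [hg, smul_smul, e1, e2]
    have h3' : Tendsto (fun n => (3 : ℝ) • g x (n + 1)) atTop
        (nhds ((3 : ℝ) • limUnder atTop (g x))) :=
      (((hcauchy x).tendsto_limUnder).comp (tendsto_add_atTop_nat 1)).const_smul _
    have h1' : Tendsto (fun n => (3 : ℝ) • g x (n + 1)) atTop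
        (nhds (limUnder atTop (g ((3 : ℝ) • x)))) := by
      rw [← h2]
      exact h1
    exact tendsto_nhds_unique h1' h3'

/-- The ascending fixed-point iteration: from the single-variable inequality
one obtains a Cauchy sequence `f(3ⁿx)/3ⁿ` whose limit `D` approximates `f`
with error `L/(1-L)·φ` and satisfies `D(3x) = 3D(x)`. -/
theorem ascending_iteration {A X : Type*}
    [NormedAddCommGroup A] [NormedSpace ℝ A]
    [NormedAddCommGroup X] [NormedSpace ℝ X] [CompleteSpace X]
    (f : A → X) (φ : A → ℝ) (hφ : ∀ x, 0 ≤ φ x)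
    (L : ℝ) (hL : L < 1)
    (hcontr : ∀ x : A, φ x ≤ 3 * L * φ (((3 : ℝ)⁻¹) • x))
    (hf : ∀ x : A, ‖(3 : ℝ) • f (((3 : ℝ)⁻¹) • x) - f x‖ ≤ φ x) :
    (∀ x : A, ‖((3 : ℝ)⁻¹) • f ((3 : ℝ) • x) - f x‖ ≤ L * φ x) ∧
    (∀ x : A, CauchySeq (fun n : ℕ => ((3 : ℝ) ^ n)⁻¹ • f ((3 : ℝ) ^ n • x))) ∧
    ∃ D : A → X,
      (∀ x : A, Filter.Tendsto (fun n : ℕ => ((3 : ℝ) ^ n)⁻¹ • f ((3 : ℝ) ^ n • x))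
        Filter.atTop (nhds (D x))) ∧
      (∀ x : A, ‖f x - D x‖ ≤ (L / (1 - L)) * φ x) ∧
      (∀ x : A, D ((3 : ℝ) • x) = (3 : ℝ) • D x) := by
  by_cases h0 : 0 ≤ L
  · exact ascending_iteration_aux f φ hφ L hL h0 hcontr hf
  · push_neg at h0
    have hφ0 : ∀ x, φ x = 0 := by
      intro x
      have h1 := hcontr x
      have h2 := hφ (((3 : ℝ)⁻¹) • x)
      nlinarith [hφ x]
    obtain ⟨c1, c2, D, hD1, hD2, hD3⟩ :=
      ascending_iteration_aux f φ hφ 0 one_pos le_rfl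
        (fun x => by rw [hφ0 x, hφ0]; norm_num) hf
    refine ⟨fun x => ?_, c2, D, hD1, fun x => ?_, hD3⟩
    · have := c1 x
      rw [hφ0] at this ⊢
      simpa using this
    · have := hD2 x
      rw [hφ0] at this ⊢
      simpa using this
end

section
/- Let X' be the set of all functions from a normed space A to a Banach space X, and fix φ : A → [0,∞). Define d(g,h) := inf{C ∈ [0,∞) : ‖g(x) − h(x)‖ ≤ C·φ(x) for all x ∈ A} (with d(g,h) = ∞ if no such C exists). Then d is a complete generalized metric on X'. -/
open scoped ENNReal

/-- The generalized metric `d(g,h) = inf {C : ‖g x - h x‖ ≤ C φ(x) ∀ x}`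
on the set of functions `A → X` (value `∞` when no such `C` exists). -/
noncomputable def phiDist {A X : Type*} [NormedAddCommGroup X] (φ : A → ℝ)
    (g h : A → X) : ℝ≥0∞ :=
  sInf {C : ℝ≥0∞ | ∀ x : A, (‖g x - h x‖₊ : ℝ≥0∞) ≤ C * ENNReal.ofReal (φ x)}

lemma phiDist_spec {A X : Type*} [NormedAddCommGroup X] (φ : A → ℝ)
    (g h : A → X) (hne : phiDist φ g h ≠ ⊤) :
    ∀ x, (‖g x - h x‖₊ : ℝ≥0∞) ≤ phiDist φ g h * ENNReal.ofReal (φ x) := by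
  set S := {C : ℝ≥0∞ | ∀ x : A, (‖g x - h x‖₊ : ℝ≥0∞) ≤ C * ENNReal.ofReal (φ x)} with hSdef
  have hS : S.Nonempty := by
    by_contra hc
    rw [Set.not_nonempty_iff_eq_empty] at hc
    exact hne (by simp [phiDist, ← hSdef, hc])
  obtain ⟨C, hC⟩ := hS
  intro x
  rcases eq_or_ne (ENNReal.ofReal (φ x)) 0 with h0 | h0
  · have := hC x
    rw [h0, mul_zero] at this
    calc (‖g x - h x‖₊ : ℝ≥0∞) ≤ 0 := this
      _ ≤ _ := zero_le
  · rw [← ENNReal.div_le_iff_le_mul (Or.inl h0) (Or.inl ENNReal.ofReal_ne_top)]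
    apply le_sInf
    intro D hD
    rw [ENNReal.div_le_iff_le_mul (Or.inl h0) (Or.inl ENNReal.ofReal_ne_top)]
    exact hD x

lemma phiDist_le {A X : Type*} [NormedAddCommGroup X] (φ : A → ℝ)
    (g h : A → X) (C : ℝ≥0∞)
    (hC : ∀ x, (‖g x - h x‖₊ : ℝ≥0∞) ≤ C * ENNReal.ofReal (φ x)) :
    phiDist φ g h ≤ C := sInf_le hC

/-- `phiDist` is a complete generalized metric on the space of all functions
from a normed space `A` to a Banach space `X`. -/
theorem phiDist_complete_generalized_metric {A X : Type*}
    [NormedAddCommGroup A] [NormedSpace ℝ A]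
    [NormedAddCommGroup X] [NormedSpace ℝ X] [CompleteSpace X]
    (φ : A → ℝ) (hφ : ∀ x, 0 ≤ φ x) :
    (∀ g h : A → X, phiDist φ g h = 0 ↔ g = h) ∧
    (∀ g h : A → X, phiDist φ g h = phiDist φ h g) ∧
    (∀ g h k : A → X, phiDist φ g k ≤ phiDist φ g h + phiDist φ h k) ∧
    (∀ u : ℕ → (A → X),
      (∀ ε : ℝ, 0 < ε → ∃ N : ℕ, ∀ m ≥ N, ∀ n ≥ N,
        phiDist φ (u m) (u n) < ENNReal.ofReal ε) →
      ∃ g : A → X, Filter.Tendsto (fun n => phiDist φ (u n) g)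
        Filter.atTop (nhds 0)) := by
  refine ⟨?_, ?_, ?_, ?_⟩
  · intro g h
    constructor
    · intro h0
      funext x
      have hs := phiDist_spec φ g h (by rw [h0]; exact ENNReal.zero_ne_top) x
      rw [h0, zero_mul, nonpos_iff_eq_zero] at hs
      have : g x - h x = 0 := by
        simpa using hs
      exact sub_eq_zero.mp this
    · rintro rfl
      refine le_antisymm ?_ zero_le
      exact phiDist_le φ _ _ 0 (fun x => by simp)
  · intro g h
    unfold phiDist
    congr 1
    ext C
    simp only [Set.mem_setOf_eq]
    constructor <;> intro hC x <;> rw [← nnnorm_neg] <;> simpa using hC x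
  · intro g h k
    rcases eq_or_ne (phiDist φ g h) ⊤ with h1 | h1
    · rw [h1]; simp
    rcases eq_or_ne (phiDist φ h k) ⊤ with h2 | h2
    · rw [h2]; simp
    apply phiDist_le
    intro x
    calc (‖g x - k x‖₊ : ℝ≥0∞) = edist (g x) (k x) := (edist_eq_enorm_sub _ _).symm
      _ ≤ edist (g x) (h x) + edist (h x) (k x) := edist_triangle _ _ _
      _ = (‖g x - h x‖₊ : ℝ≥0∞) + (‖h x - k x‖₊ : ℝ≥0∞) := by
          rw [edist_eq_enorm_sub, edist_eq_enorm_sub, enorm_eq_nnnorm, enorm_eq_nnnorm]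
      _ ≤ phiDist φ g h * ENNReal.ofReal (φ x) + phiDist φ h k * ENNReal.ofReal (φ x) :=
          add_le_add (phiDist_spec φ g h h1 x) (phiDist_spec φ h k h2 x)
      _ = (phiDist φ g h + phiDist φ h k) * ENNReal.ofReal (φ x) := (add_mul _ _ _).symm
  · intro u hu
    -- norm bound from Cauchy condition
    have key : ∀ ε : ℝ, 0 < ε → ∃ N : ℕ, ∀ m ≥ N, ∀ n ≥ N, ∀ x,
        ‖u m x - u n x‖ ≤ ε * φ x := by
      intro ε hε
      obtain ⟨N, hN⟩ := hu ε hε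
      refine ⟨N, fun m hm n hn x => ?_⟩
      have h1 := hN m hm n hn
      have h2 := phiDist_spec φ (u m) (u n) (h1.trans_le le_top).ne x
      have h3 : (‖u m x - u n x‖₊ : ℝ≥0∞) ≤ ENNReal.ofReal ε * ENNReal.ofReal (φ x) :=
        h2.trans (mul_le_mul_left h1.le _)
      rw [← ENNReal.ofReal_mul hε.le, ← enorm_eq_nnnorm, ← ofReal_norm] at h3
      exact (ENNReal.ofReal_le_ofReal_iff (mul_nonneg hε.le (hφ x))).mp h3
    -- pointwise Cauchy
    have cauchy : ∀ x, CauchySeq (fun n => u n x) := by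
      intro x
      rw [Metric.cauchySeq_iff]
      intro ε hε
      have hpos : 0 < ε / (φ x + 1) := div_pos hε (by linarith [hφ x])
      obtain ⟨N, hN⟩ := key _ hpos
      refine ⟨N, fun m hm n hn => ?_⟩
      have := hN m hm n hn x
      rw [dist_eq_norm]
      calc ‖u m x - u n x‖ ≤ ε / (φ x + 1) * φ x := this
        _ < ε := by
            rw [div_mul_eq_mul_div, div_lt_iff₀ (by linarith [hφ x])]
            nlinarith [hφ x]
    have lims : ∀ x, ∃ l : X, Filter.Tendsto (fun n => u n x) Filter.atTop (nhds l) :=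
      fun x => cauchySeq_tendsto_of_complete (cauchy x)
    choose g hg using lims
    refine ⟨g, ?_⟩
    rw [ENNReal.tendsto_atTop_zero]
    intro ε hε
    set ε' : ℝ := (min 1 ε).toReal with hε'def
    have hε'pos : 0 < ε' := by
      rw [hε'def]
      apply ENNReal.toReal_pos
      · exact (lt_min one_pos hε).ne'
      · exact (min_le_left _ _).trans_lt (by norm_num) |>.ne
    have hε'le : ENNReal.ofReal ε' ≤ ε := by
      rw [hε'def, ENNReal.ofReal_toReal (by
        exact ((min_le_left _ _).trans_lt (by norm_num)).ne)]
      exact min_le_right _ _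
    obtain ⟨N, hN⟩ := key ε' hε'pos
    refine ⟨N, fun n hn => le_trans ?_ hε'le⟩
    apply phiDist_le
    intro x
    have hb : ‖u n x - g x‖ ≤ ε' * φ x := by
      have : Filter.Tendsto (fun m => ‖u n x - u m x‖) Filter.atTop (nhds ‖u n x - g x‖) :=
        ((tendsto_const_nhds.sub (hg x)).norm)
      refine le_of_tendsto this ?_
      filter_upwards [Filter.eventually_ge_atTop N] with m hm
      exact hN n hn m hm x
    rw [← enorm_eq_nnnorm, ← ofReal_norm, ← ENNReal.ofReal_mul hε'pos.le]
    exact ENNReal.ofReal_le_ofReal hb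
end

section
/- With A, X, 𝕋 as above: let p ∈ (0,1) and θ ≥ 0, and suppose f : A → X satisfies ‖μf((x+y+z)/3) + μf((x−2y+z)/3) + μf((x+y−2z)/3) − f(μx)‖ ≤ θ(‖x‖^p + ‖y‖^p + ‖z‖^p) and ‖f([a,b,c]) − [f(a),b,c] − [a,f(b),c] − [a,b,f(c)]‖ ≤ θ(‖a‖^p + ‖b‖^p + ‖c‖^p) for all μ ∈ 𝕋 and all x,y,z,a,b,c ∈ A. Then there exists a unique ternary derivation D : A → X with ‖f(x) − D(x)‖ ≤ (2^p·θ/(2 − 2^p))·‖x‖^p for all x ∈ A. -/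
/-- A Banach ternary algebra `A` together with a ternary Banach `A`-module `X`:
a trilinear bounded ternary product on `A` and the three trilinear bounded
module actions of `A` on `X`. -/
structure TernarySystem (A X : Type*)
    [NormedAddCommGroup A] [NormedSpace ℂ A]
    [NormedAddCommGroup X] [NormedSpace ℂ X] where
  tA : A → A → A → A
  m1 : X → A → A → X
  m2 : A → X → A → X
  m3 : A → A → X → X
  tA_lin1 : ∀ b c, IsLinearMap ℂ fun a => tA a b c
  tA_lin2 : ∀ a c, IsLinearMap ℂ fun b => tA a b c
  tA_lin3 : ∀ a b, IsLinearMap ℂ fun c => tA a b c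
  m1_lin1 : ∀ b c, IsLinearMap ℂ fun u => m1 u b c
  m1_lin2 : ∀ u c, IsLinearMap ℂ fun b => m1 u b c
  m1_lin3 : ∀ u b, IsLinearMap ℂ fun c => m1 u b c
  m2_lin1 : ∀ u c, IsLinearMap ℂ fun a => m2 a u c
  m2_lin2 : ∀ a c, IsLinearMap ℂ fun u => m2 a u c
  m2_lin3 : ∀ a u, IsLinearMap ℂ fun c => m2 a u c
  m3_lin1 : ∀ b u, IsLinearMap ℂ fun a => m3 a b u
  m3_lin2 : ∀ a u, IsLinearMap ℂ fun b => m3 a b u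
  m3_lin3 : ∀ a b, IsLinearMap ℂ fun u => m3 a b u
  norm_tA : ∀ a b c, ‖tA a b c‖ ≤ ‖a‖ * ‖b‖ * ‖c‖
  norm_m1 : ∀ u b c, ‖m1 u b c‖ ≤ ‖u‖ * ‖b‖ * ‖c‖
  norm_m2 : ∀ a u c, ‖m2 a u c‖ ≤ ‖a‖ * ‖u‖ * ‖c‖
  norm_m3 : ∀ a b u, ‖m3 a b u‖ ≤ ‖a‖ * ‖b‖ * ‖u‖

/-- A ternary derivation: a `ℂ`-linear map satisfying the ternary Leibniz rule. -/
def IsTernaryDerivation {A X : Type*}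
    [NormedAddCommGroup A] [NormedSpace ℂ A]
    [NormedAddCommGroup X] [NormedSpace ℂ X]
    (S : TernarySystem A X) (D : A → X) : Prop :=
  IsLinearMap ℂ D ∧
  ∀ x y z : A, D (S.tA x y z) = S.m1 (D x) y z + S.m2 x (D y) z + S.m3 x y (D z)

/-- A Jordan ternary derivation: a `ℂ`-linear map satisfying the Leibniz rule
on cubes. -/
def IsJordanTernaryDerivation {A X : Type*}
    [NormedAddCommGroup A] [NormedSpace ℂ A]
    [NormedAddCommGroup X] [NormedSpace ℂ X]
    (S : TernarySystem A X) (D : A → X) : Prop :=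
  IsLinearMap ℂ D ∧
  ∀ x : A, D (S.tA x x x) = S.m1 (D x) x x + S.m2 x (D x) x + S.m3 x x (D x)

set_option maxHeartbeats 4000000 in
/-- Hyers–Ulam–Rassias stability of ternary derivations, `p ∈ (0,1)`
(Corollary 2.4). -/
theorem ternary_derivation_stability_rpow {A X : Type*}
    [NormedAddCommGroup A] [NormedSpace ℂ A] [CompleteSpace A]
    [NormedAddCommGroup X] [NormedSpace ℂ X] [CompleteSpace X]
    (S : TernarySystem A X)
    (f : A → X) (p θ : ℝ) (hp0 : 0 < p) (hp1 : p < 1) (hθ : 0 ≤ θ)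
    (hf1 : ∀ (μ : ℂ), ‖μ‖ = 1 → ∀ x y z : A,
      ‖μ • f (((3 : ℂ)⁻¹) • (x + y + z)) + μ • f (((3 : ℂ)⁻¹) • (x - 2 • y + z)) +
          μ • f (((3 : ℂ)⁻¹) • (x + y - 2 • z)) - f (μ • x)‖ ≤
        θ * (‖x‖ ^ p + ‖y‖ ^ p + ‖z‖ ^ p))
    (hf2 : ∀ a b c : A,
      ‖f (S.tA a b c) - S.m1 (f a) b c - S.m2 a (f b) c - S.m3 a b (f c)‖ ≤
        θ * (‖a‖ ^ p + ‖b‖ ^ p + ‖c‖ ^ p)) :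
    ∃! D : A → X, IsTernaryDerivation S D ∧
      ∀ x : A, ‖f x - D x‖ ≤ ((2 : ℝ) ^ p * θ / (2 - (2 : ℝ) ^ p)) * ‖x‖ ^ p := by

  have h3 : (0:ℝ) < 3 := by norm_num
  have hr0 : (0:ℝ) < (3:ℝ) ^ (p-1) := Real.rpow_pos_of_pos h3 _
  have hr1 : (3:ℝ) ^ (p-1) < 1 :=
    Real.rpow_lt_one_of_one_lt_of_neg (by norm_num) (by linarith)
  set r : ℝ := (3:ℝ) ^ (p-1) with hrdef
  have hnorm3n : ∀ n : ℕ, ‖((3:ℂ)^n)‖ = (3:ℝ)^n := by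
    intro n; rw [norm_pow]; norm_num
  have hA : ∀ (n:ℕ) (v : A), ‖(3:ℂ)^n • v‖ ^ p = ((3:ℝ)^p)^n * ‖v‖^p := by
    intro n v
    rw [norm_smul, hnorm3n, Real.mul_rpow (by positivity) (norm_nonneg v),
      ← Real.rpow_natCast (3:ℝ) n, ← Real.rpow_mul (by norm_num), mul_comm (n:ℝ) p,
      Real.rpow_mul (by norm_num), Real.rpow_natCast]
  have hgeom : ∀ n : ℕ, ((3:ℝ)^n)⁻¹ * ((3:ℝ)^p)^n = r ^ n := by
    intro n
    rw [hrdef, show (3:ℝ)^(p-1) = (3:ℝ)^p / 3 by rw [Real.rpow_sub h3, Real.rpow_one],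
      div_pow]
    ring
  have hJ : ∀ a b c : A, ‖f a + f b + f c - f (a+b+c)‖ ≤
      θ * (‖a+b+c‖^p + ‖a-b‖^p + ‖a-c‖^p) := by
    intro a b c
    have h := hf1 1 (by simp) (a+b+c) (a-b) (a-c)
    have e0 : ∀ v : A, (3:ℂ)⁻¹ • ((3:ℂ) • v) = v := by
      intro v; rw [smul_smul]; norm_num
    have e1 : (a+b+c) + (a-b) + (a-c) = (3:ℂ) • a := by module
    have e2 : (a+b+c) - 2 • (a-b) + (a-c) = (3:ℂ) • b := by module
    have e3 : (a+b+c) + (a-b) - 2 • (a-c) = (3:ℂ) • c := by module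
    rw [e1, e2, e3, e0, e0, e0] at h
    simpa using h
  have hf0 : f 0 = 0 := by
    have h := hJ 0 0 0
    simp [Real.zero_rpow (ne_of_gt hp0)] at h
    rw [← two_smul ℂ] at h
    exact (smul_eq_zero.mp h).resolve_left two_ne_zero
  have hcube : ∀ u : A, ‖(3:ℂ) • f u - f ((3:ℂ) • u)‖ ≤ θ * ((3:ℝ)^p * ‖u‖^p) := by
    intro u
    have h := hJ u u u
    have e1 : u + u + u = (3:ℂ) • u := by module
    have e2 : f u + f u + f u = (3:ℂ) • f u := by module
    rw [e1, e2] at h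
    have e3 : ‖(3:ℂ) • u‖ ^ p = (3:ℝ)^p * ‖u‖^p := by
      rw [norm_smul, show ‖(3:ℂ)‖ = (3:ℝ) by norm_num,
        Real.mul_rpow (by norm_num) (norm_nonneg u)]
    simp only [sub_self, norm_zero, Real.zero_rpow (ne_of_gt hp0), add_zero] at h
    rw [e3] at h
    exact h
  set g : ℕ → A → X := fun n x => ((3:ℂ)^n)⁻¹ • f ((3:ℂ)^n • x) with hgdef
  have hgd : ∀ (u : A) (n : ℕ), dist (g n u) (g (n+1) u) ≤ (r*θ*‖u‖^p) * r ^ n := by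
    intro u n
    rw [dist_eq_norm]
    have hne : (3:ℂ) ≠ 0 := by norm_num
    have e1 : g n u = ((3:ℂ)^(n+1))⁻¹ • ((3:ℂ) • f ((3:ℂ)^n • u)) := by
      simp only [hgdef]
      rw [smul_smul]
      congr 1
      rw [pow_succ, mul_inv, mul_assoc, inv_mul_cancel₀ hne, mul_one]
    have e2 : g (n+1) u = ((3:ℂ)^(n+1))⁻¹ • f ((3:ℂ) • ((3:ℂ)^n • u)) := by
      simp only [hgdef]
      congr 2
      rw [smul_smul, ← pow_succ']
    rw [e1, e2, ← smul_sub, norm_smul, norm_inv, hnorm3n]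
    calc ((3:ℝ)^(n+1))⁻¹ * ‖(3:ℂ) • f ((3:ℂ)^n • u) - f ((3:ℂ) • ((3:ℂ)^n • u))‖
        ≤ ((3:ℝ)^(n+1))⁻¹ * (θ * ((3:ℝ)^p * ‖(3:ℂ)^n • u‖^p)) :=
          mul_le_mul_of_nonneg_left (hcube _) (by positivity)
      _ = ((3:ℝ)^(n+1))⁻¹ * (((3:ℝ)^p)^(n+1)) * (θ * ‖u‖^p) := by
          rw [hA, pow_succ']; ring
      _ = r^(n+1) * (θ * ‖u‖^p) := by rw [hgeom (n+1)]
      _ = (r*θ*‖u‖^p) * r^n := by rw [pow_succ']; ring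
  have hCau : ∀ u : A, CauchySeq (fun n => g n u) :=
    fun u => cauchySeq_of_le_geometric r _ hr1 (hgd u)
  set D : A → X := fun u => Filter.limUnder Filter.atTop (fun n => g n u) with hDdef
  have hD : ∀ u, Filter.Tendsto (fun n => g n u) Filter.atTop (nhds (D u)) :=
    fun u => (hCau u).tendsto_limUnder
  have hfD : ∀ u, ‖f u - D u‖ ≤ ((2:ℝ)^p * θ / (2 - (2:ℝ)^p)) * ‖u‖^p := by
    intro u
    have h0 : g 0 u = f u := by simp [hgdef]
    have h := dist_le_of_le_geometric_of_tendsto₀ r _ hr1 (hgd u) (hD u)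
    rw [h0, dist_eq_norm] at h
    refine h.trans ?_
    have q2pos : (0:ℝ) < (2:ℝ)^p := Real.rpow_pos_of_pos two_pos p
    have q2lt : (2:ℝ)^p < 2 := by
      nth_rewrite 2 [show (2:ℝ) = (2:ℝ)^(1:ℝ) from (Real.rpow_one 2).symm]
      exact Real.rpow_lt_rpow_of_exponent_lt one_lt_two hp1
    have h23 : (2:ℝ)^(1-p) ≤ (3:ℝ)^(1-p) :=
      Real.rpow_le_rpow (by norm_num) (by norm_num) (by linarith)
    have h2pos : (0:ℝ) < (2:ℝ)^(1-p) := Real.rpow_pos_of_pos two_pos _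
    have e3 : (3:ℝ)^(p-1) ≤ (2:ℝ)^(p-1) := by
      rw [show p-1 = -(1-p) by ring, Real.rpow_neg (by norm_num : (0:ℝ) ≤ 3),
        Real.rpow_neg (by norm_num : (0:ℝ) ≤ 2)]
      exact inv_anti₀ h2pos h23
    have e2 : 2 * (2:ℝ)^(p-1) = (2:ℝ)^p := by
      nth_rewrite 1 [show (2:ℝ) = (2:ℝ)^(1:ℝ) from (Real.rpow_one 2).symm]
      rw [← Real.rpow_add two_pos]; norm_num
    have hkey : 2 * r ≤ (2:ℝ)^p := by
      rw [← e2, hrdef]; linarith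
    have ht0 : (0:ℝ) ≤ ‖u‖^p := Real.rpow_nonneg (norm_nonneg u) p
    rw [div_le_iff₀ (by linarith : (0:ℝ) < 1 - r)]
    rw [div_mul_eq_mul_div, div_mul_eq_mul_div, le_div_iff₀ (by linarith : (0:ℝ) < 2 - (2:ℝ)^p)]
    nlinarith [mul_nonneg (mul_nonneg hθ ht0) (sub_nonneg.mpr hkey), hr0]
  have hzero : ∀ (h : ℕ → X) (L : X) (b : ℕ → ℝ),
      Filter.Tendsto h Filter.atTop (nhds L) →
      Filter.Tendsto b Filter.atTop (nhds 0) →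
      (∀ n, ‖h n‖ ≤ b n) → L = 0 := by
    intro h L b hh hb hle
    exact norm_le_zero_iff.mp (le_of_tendsto_of_tendsto' hh.norm hb hle)
  have hvan : ∀ c : ℝ, Filter.Tendsto (fun n:ℕ => c * r^n) Filter.atTop (nhds 0) := by
    intro c
    have := (tendsto_pow_atTop_nhds_zero_of_lt_one hr0.le hr1).const_mul c
    simpa using this
  have hg0 : ∀ n, g n (0:A) = 0 := by intro n; simp [hgdef, hf0]
  have hD0 : D 0 = 0 := by
    refine tendsto_nhds_unique (hD 0) ?_
    simp only [hg0]
    exact tendsto_const_nhds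
  have hadd3 : ∀ a b c : A, D (a+b+c) = D a + D b + D c := by
    intro a b c
    have key : D a + D b + D c - D (a+b+c) = 0 := by
      apply hzero (fun n => g n a + g n b + g n c - g n (a+b+c)) _
        (fun n => (θ * (‖a+b+c‖^p + ‖a-b‖^p + ‖a-c‖^p)) * r^n)
      · exact (((hD a).add (hD b)).add (hD c)).sub (hD (a+b+c))
      · exact hvan _
      · intro n
        have e : g n a + g n b + g n c - g n (a+b+c)
            = ((3:ℂ)^n)⁻¹ • (f ((3:ℂ)^n•a) + f ((3:ℂ)^n•b) + f ((3:ℂ)^n•c)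
              - f ((3:ℂ)^n•(a+b+c))) := by
          simp only [hgdef, smul_add, smul_sub]
        have h := hJ ((3:ℂ)^n•a) ((3:ℂ)^n•b) ((3:ℂ)^n•c)
        have ea : (3:ℂ)^n•a + (3:ℂ)^n•b + (3:ℂ)^n•c = (3:ℂ)^n•(a+b+c) := by
          rw [smul_add, smul_add]
        have eb : (3:ℂ)^n•a - (3:ℂ)^n•b = (3:ℂ)^n•(a-b) := (smul_sub _ _ _).symm
        have ec : (3:ℂ)^n•a - (3:ℂ)^n•c = (3:ℂ)^n•(a-c) := (smul_sub _ _ _).symm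
        rw [ea, eb, ec, hA, hA, hA] at h
        rw [e, norm_smul, norm_inv, hnorm3n]
        calc ((3:ℝ)^n)⁻¹ * ‖f ((3:ℂ)^n•a) + f ((3:ℂ)^n•b) + f ((3:ℂ)^n•c)
              - f ((3:ℂ)^n•(a+b+c))‖
            ≤ ((3:ℝ)^n)⁻¹ * (θ * (((3:ℝ)^p)^n * (‖a+b+c‖^p + ‖a-b‖^p + ‖a-c‖^p))) :=
              mul_le_mul_of_nonneg_left (h.trans_eq (by ring)) (by positivity)
          _ = (θ * (‖a+b+c‖^p + ‖a-b‖^p + ‖a-c‖^p)) * r^n := by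
              rw [← hgeom n]; ring
    have := sub_eq_zero.mp key
    exact this.symm
  have hadd : ∀ a b : A, D (a+b) = D a + D b := by
    intro a b
    have := hadd3 a b 0
    simpa [hD0] using this
  have hunit : ∀ (μ : ℂ), ‖μ‖ = 1 → ∀ u : A, D (μ • u) = μ • D u := by
    intro μ hμ u
    have key : μ • D u - D (μ • u) = 0 := by
      apply hzero (fun n => μ • g n u - g (n+1) (μ • u)) _
        (fun n => (r * θ * ‖u‖^p) * r^n)
      · exact ((hD u).const_smul μ).sub ((hD (μ•u)).comp (Filter.tendsto_add_atTop_nat 1))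
      · exact hvan _
      · intro n
        have h := hf1 μ hμ ((3:ℂ)^(n+1) • u) 0 0
        have earg : (3:ℂ)⁻¹ • ((3:ℂ)^(n+1) • u) = (3:ℂ)^n • u := by
          rw [smul_smul]
          congr 1
          rw [pow_succ]
          field_simp
        simp only [add_zero, smul_zero, sub_zero, norm_zero,
          Real.zero_rpow (ne_of_gt hp0)] at h
        rw [earg] at h
        have e3 : μ • f ((3:ℂ)^n • u) + μ • f ((3:ℂ)^n • u) + μ • f ((3:ℂ)^n • u)
            = (3:ℂ) • (μ • f ((3:ℂ)^n • u)) := by module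
        rw [e3, hA] at h
        have e : μ • g n u - g (n+1) (μ • u)
            = ((3:ℂ)^(n+1))⁻¹ • ((3:ℂ) • (μ • f ((3:ℂ)^n • u)) - f (μ • ((3:ℂ)^(n+1) • u))) := by
          simp only [hgdef]
          rw [smul_sub]
          congr 1
          · rw [smul_smul, smul_smul, smul_smul]
            congr 1
            rw [pow_succ]
            field_simp
          · congr 1
            rw [smul_comm]
        rw [e, norm_smul, norm_inv, hnorm3n]
        calc ((3:ℝ)^(n+1))⁻¹ * ‖(3:ℂ) • (μ • f ((3:ℂ)^n • u)) - f (μ • ((3:ℂ)^(n+1) • u))‖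
            ≤ ((3:ℝ)^(n+1))⁻¹ * (θ * (((3:ℝ)^p)^(n+1) * ‖u‖^p)) :=
              mul_le_mul_of_nonneg_left h (by positivity)
          _ = (((3:ℝ)^(n+1))⁻¹ * ((3:ℝ)^p)^(n+1)) * (θ*‖u‖^p) := by ring
          _ = r^(n+1) * (θ*‖u‖^p) := by rw [hgeom (n+1)]
          _ = (r*θ*‖u‖^p) * r^n := by rw [pow_succ']; ring
    exact (sub_eq_zero.mp key).symm
  have hDn : ∀ (n : ℕ) (x : A), D (n • x) = n • D x := by
    intro n x
    induction n with
    | zero => simpa using hD0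
    | succ k ih => rw [succ_nsmul, succ_nsmul, hadd, ih]
  have hreal1 : ∀ (t : ℝ), |t| ≤ 1 → ∀ x : A, D ((t:ℂ) • x) = (t:ℂ) • D x := by
    intro t ht x
    have ht2 : t^2 ≤ 1 := by nlinarith [abs_nonneg t, sq_abs t]
    set s := Real.sqrt (1 - t^2) with hs
    have hs2 : s^2 = 1 - t^2 := Real.sq_sqrt (by linarith)
    set μ1 : ℂ := ⟨t, s⟩ with hμ1
    set μ2 : ℂ := ⟨t, -s⟩ with hμ2
    have hn1 : ‖μ1‖ = 1 := by
      rw [Complex.norm_def, hμ1, Complex.normSq_mk,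
        show t*t + s*s = 1 by nlinarith [hs2]]
      exact Real.sqrt_one
    have hn2 : ‖μ2‖ = 1 := by
      rw [Complex.norm_def, hμ2, Complex.normSq_mk,
        show t*t + (-s)*(-s) = 1 by nlinarith [hs2]]
      exact Real.sqrt_one
    have hsum : μ1 + μ2 = ((2*t : ℝ) : ℂ) := by
      apply Complex.ext
      · simp [hμ1, hμ2]; ring
      · simp [hμ1, hμ2]
    have h2 : D (((2*t:ℝ):ℂ) • x) = ((2*t:ℝ):ℂ) • D x := by
      rw [← hsum, add_smul, hadd, hunit μ1 hn1, hunit μ2 hn2, ← add_smul]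
    have ea : ((2*t:ℝ):ℂ) • x = (t:ℂ) • x + (t:ℂ) • x := by
      push_cast
      module
    have eb : ((2*t:ℝ):ℂ) • D x = (t:ℂ) • D x + (t:ℂ) • D x := by
      push_cast
      module
    rw [ea, hadd, eb] at h2
    rw [← two_smul ℂ, ← two_smul ℂ] at h2
    exact smul_right_injective X (two_ne_zero) h2
  have hrealAll : ∀ (t : ℝ) (x : A), D ((t:ℂ) • x) = (t:ℂ) • D x := by
    intro t x
    set n : ℕ := ⌈|t|⌉₊ + 1 with hn
    have hne : ((n:ℝ)) ≠ 0 := by positivity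
    have hneC : ((n:ℂ)) ≠ 0 := Nat.cast_ne_zero.mpr (by omega)
    have htn : |t / (n:ℝ)| ≤ 1 := by
      rw [abs_div, abs_of_nonneg (by positivity : (0:ℝ) ≤ (n:ℝ)), div_le_one (by positivity)]
      calc |t| ≤ (⌈|t|⌉₊ : ℝ) := Nat.le_ceil _
        _ ≤ (n:ℝ) := by rw [hn]; push_cast; linarith
    have h1 := hreal1 (t/(n:ℝ)) htn x
    have e : (t:ℂ) • x = n • (((t/(n:ℝ) : ℝ):ℂ) • x) := by
      rw [← Nat.cast_smul_eq_nsmul ℂ, smul_smul]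
      congr 1
      rw [Complex.ofReal_div, Complex.ofReal_natCast, mul_div_cancel₀ _ hneC]
    rw [e, hDn, h1, ← Nat.cast_smul_eq_nsmul ℂ, smul_smul]
    congr 1
    rw [Complex.ofReal_div, Complex.ofReal_natCast, mul_div_cancel₀ _ hneC]
  have hsmul : ∀ (c : ℂ) (x : A), D (c • x) = c • D x := by
    intro c x
    have hI : ‖Complex.I‖ = 1 := by simp
    have e : c • x = ((c.re:ℝ):ℂ) • x + ((c.im:ℝ):ℂ) • (Complex.I • x) := by
      rw [smul_smul, ← add_smul]
      congr 1
      exact (Complex.re_add_im c).symm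
    rw [e, hadd, hrealAll, hrealAll, hunit Complex.I hI, smul_smul, ← add_smul,
      Complex.re_add_im]
  have hlimT : ∀ (T : X → X) (c : ℝ), IsLinearMap ℂ T → (∀ v, ‖T v‖ ≤ c * ‖v‖) →
      ∀ (a : A), Filter.Tendsto (fun n => T (g n a)) Filter.atTop (nhds (T (D a))) := by
    intro T c hT hTb a
    rw [tendsto_iff_norm_sub_tendsto_zero]
    have hb : Filter.Tendsto (fun n => c * ‖g n a - D a‖) Filter.atTop (nhds 0) := by
      have := (tendsto_iff_norm_sub_tendsto_zero.mp (hD a)).const_mul c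
      simpa using this
    refine squeeze_zero (fun n => norm_nonneg _) (fun n => ?_) hb
    have : T (g n a) - T (D a) = T (g n a - D a) := ((hT.mk' T).map_sub _ _).symm
    rw [this]
    exact hTb _
  have hder : ∀ a b c : A,
      D (S.tA a b c) = S.m1 (D a) b c + S.m2 a (D b) c + S.m3 a b (D c) := by
    intro a b c
    have hneC : ∀ m : ℕ, ((3:ℂ)^m) ≠ 0 := fun m => pow_ne_zero _ (by norm_num)
    have h3n : Filter.Tendsto (fun n => g (3*n) (S.tA a b c)) Filter.atTop
        (nhds (D (S.tA a b c))) := by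
      apply (hD (S.tA a b c)).comp
      apply Filter.tendsto_atTop_atTop.mpr
      exact fun b => ⟨b, fun a ha => by omega⟩
    have hm1 := hlimT (fun v => S.m1 v b c) (‖b‖*‖c‖) (S.m1_lin1 b c)
      (fun v => (S.norm_m1 v b c).trans_eq (by ring)) a
    have hm2 := hlimT (fun v => S.m2 a v c) (‖a‖*‖c‖) (S.m2_lin2 a c)
      (fun v => (S.norm_m2 a v c).trans_eq (by ring)) b
    have hm3 := hlimT (fun v => S.m3 a b v) (‖a‖*‖b‖) (S.m3_lin3 a b)
      (fun v => (S.norm_m3 a b v).trans_eq (by ring)) c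
    have key : D (S.tA a b c) - S.m1 (D a) b c - S.m2 a (D b) c - S.m3 a b (D c) = 0 := by
      apply hzero (fun n => g (3*n) (S.tA a b c) - S.m1 (g n a) b c
          - S.m2 a (g n b) c - S.m3 a b (g n c)) _
        (fun n => (θ * (‖a‖^p+‖b‖^p+‖c‖^p)) * r^n)
      · exact ((h3n.sub hm1).sub hm2).sub hm3
      · exact hvan _
      · intro n
        have hsplit : (3:ℂ)^(3*n) = (3:ℂ)^n * (3:ℂ)^n * (3:ℂ)^n := by
          rw [← pow_add, ← pow_add]; congr 1; ring
        have pull1 : ∀ (v : X), ((3:ℂ)^(3*n))⁻¹ • S.m1 v ((3:ℂ)^n • b) ((3:ℂ)^n • c)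
            = S.m1 (((3:ℂ)^n)⁻¹ • v) b c := by
          intro v
          rw [(S.m1_lin3 v ((3:ℂ)^n • b)).map_smul, (S.m1_lin2 v c).map_smul,
            (S.m1_lin1 b c).map_smul, smul_smul, smul_smul]
          congr 1
          rw [hsplit]
          field_simp
        have pull2 : ∀ (v : X), ((3:ℂ)^(3*n))⁻¹ • S.m2 ((3:ℂ)^n • a) v ((3:ℂ)^n • c)
            = S.m2 a (((3:ℂ)^n)⁻¹ • v) c := by
          intro v
          rw [(S.m2_lin3 ((3:ℂ)^n • a) v).map_smul, (S.m2_lin1 v c).map_smul,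
            (S.m2_lin2 a c).map_smul, smul_smul, smul_smul]
          congr 1
          rw [hsplit]
          field_simp
        have pull3 : ∀ (v : X), ((3:ℂ)^(3*n))⁻¹ • S.m3 ((3:ℂ)^n • a) ((3:ℂ)^n • b) v
            = S.m3 a b (((3:ℂ)^n)⁻¹ • v) := by
          intro v
          rw [(S.m3_lin2 ((3:ℂ)^n • a) v).map_smul, (S.m3_lin1 b v).map_smul,
            (S.m3_lin3 a b).map_smul, smul_smul, smul_smul]
          congr 1
          rw [hsplit]
          field_simp
        have etA : S.tA ((3:ℂ)^n•a) ((3:ℂ)^n•b) ((3:ℂ)^n•c) = (3:ℂ)^(3*n) • S.tA a b c := by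
          rw [(S.tA_lin1 _ _).map_smul, (S.tA_lin2 _ _).map_smul, (S.tA_lin3 _ _).map_smul,
            smul_smul, smul_smul]
          congr 1
          rw [hsplit]
          try ring
        have h := hf2 ((3:ℂ)^n•a) ((3:ℂ)^n•b) ((3:ℂ)^n•c)
        rw [etA, hA, hA, hA] at h
        have e : g (3*n) (S.tA a b c) - S.m1 (g n a) b c - S.m2 a (g n b) c - S.m3 a b (g n c)
            = ((3:ℂ)^(3*n))⁻¹ • (f ((3:ℂ)^(3*n) • S.tA a b c)
              - S.m1 (f ((3:ℂ)^n•a)) ((3:ℂ)^n•b) ((3:ℂ)^n•c)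
              - S.m2 ((3:ℂ)^n•a) (f ((3:ℂ)^n•b)) ((3:ℂ)^n•c)
              - S.m3 ((3:ℂ)^n•a) ((3:ℂ)^n•b) (f ((3:ℂ)^n•c))) := by
          simp only [hgdef]
          rw [smul_sub, smul_sub, smul_sub, pull1, pull2, pull3]
        rw [e, norm_smul, norm_inv, hnorm3n]
        calc ((3:ℝ)^(3*n))⁻¹ * ‖f ((3:ℂ)^(3*n) • S.tA a b c)
              - S.m1 (f ((3:ℂ)^n•a)) ((3:ℂ)^n•b) ((3:ℂ)^n•c)
              - S.m2 ((3:ℂ)^n•a) (f ((3:ℂ)^n•b)) ((3:ℂ)^n•c)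
              - S.m3 ((3:ℂ)^n•a) ((3:ℂ)^n•b) (f ((3:ℂ)^n•c))‖
            ≤ ((3:ℝ)^(3*n))⁻¹ * (θ * (((3:ℝ)^p)^n * (‖a‖^p+‖b‖^p+‖c‖^p))) :=
              mul_le_mul_of_nonneg_left (h.trans_eq (by ring)) (by positivity)
          _ ≤ ((3:ℝ)^n)⁻¹ * (θ * (((3:ℝ)^p)^n * (‖a‖^p+‖b‖^p+‖c‖^p))) := by
              apply mul_le_mul_of_nonneg_right _ (by positivity)
              apply inv_anti₀ (by positivity)
              apply pow_le_pow_right₀ (by norm_num) (by omega)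
          _ = (θ * (‖a‖^p+‖b‖^p+‖c‖^p)) * r^n := by rw [← hgeom n]; ring
    rw [← sub_eq_zero, ← key]
    abel
  refine ⟨D, ⟨⟨⟨hadd, hsmul⟩, hder⟩, hfD⟩, ?_⟩
  intro D' hD'
  obtain ⟨⟨hlin', hder'⟩, hbd'⟩ := hD'
  funext x
  set K : ℝ := (2:ℝ)^p * θ / (2 - (2:ℝ)^p) with hK
  have hbnd : ∀ n : ℕ, ‖D' x - D x‖ ≤ (2*K*‖x‖^p) * r^n := by
    intro n
    have hsm : (D' ((3:ℂ)^n•x) - f ((3:ℂ)^n•x)) + (f ((3:ℂ)^n•x) - D ((3:ℂ)^n•x))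
        = (3:ℂ)^n • (D' x - D x) := by
      rw [hlin'.map_smul, hsmul, smul_sub]
      abel
    have e' : ((3:ℂ)^n)⁻¹ • ((D' ((3:ℂ)^n•x) - f ((3:ℂ)^n•x))
        + (f ((3:ℂ)^n•x) - D ((3:ℂ)^n•x))) = D' x - D x := by
      rw [hsm, smul_smul, inv_mul_cancel₀ (pow_ne_zero _ (by norm_num : (3:ℂ) ≠ 0)), one_smul]
    rw [← e', norm_smul, norm_inv, hnorm3n]
    have hb1 : ‖D' ((3:ℂ)^n•x) - f ((3:ℂ)^n•x)‖ ≤ K * ‖(3:ℂ)^n•x‖^p := by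
      rw [norm_sub_rev]
      exact hbd' _
    have hb2 : ‖f ((3:ℂ)^n•x) - D ((3:ℂ)^n•x)‖ ≤ K * ‖(3:ℂ)^n•x‖^p := hfD _
    calc ((3:ℝ)^n)⁻¹ * ‖(D' ((3:ℂ)^n•x) - f ((3:ℂ)^n•x)) + (f ((3:ℂ)^n•x) - D ((3:ℂ)^n•x))‖
        ≤ ((3:ℝ)^n)⁻¹ * (2 * K * ‖(3:ℂ)^n•x‖^p) := by
          apply mul_le_mul_of_nonneg_left _ (by positivity)
          calc ‖(D' ((3:ℂ)^n•x) - f ((3:ℂ)^n•x)) + (f ((3:ℂ)^n•x) - D ((3:ℂ)^n•x))‖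
              ≤ ‖D' ((3:ℂ)^n•x) - f ((3:ℂ)^n•x)‖ + ‖f ((3:ℂ)^n•x) - D ((3:ℂ)^n•x)‖ :=
                norm_add_le _ _
            _ ≤ 2 * K * ‖(3:ℂ)^n•x‖^p := by linarith
      _ = (2*K*‖x‖^p) * r^n := by rw [hA, ← hgeom n]; ring
  have h0 : ‖D' x - D x‖ ≤ 0 :=
    le_of_tendsto_of_tendsto' tendsto_const_nhds (hvan _) hbnd
  exact sub_eq_zero.mp (norm_le_zero_iff.mp h0)
end

section
/- With A, X as above: let p ∈ (0,1), θ ≥ 0, and suppose f : A → X satisfies ‖μf((x+y+z)/3) + μf((x−2y+z)/3) + μf((x+y−2z)/3) − f(μx)‖ ≤ θ(‖x‖^p + ‖y‖^p + ‖z‖^p) for all μ ∈ 𝕋 and ‖f([x,x,x]) − [f(x),x,x] − [x,f(x),x] − [x,x,f(x)]‖ ≤ 3θ‖x‖^p for all x. Then there exists a unique Jordan ternary derivation D : A → X with ‖f(x) − D(x)‖ ≤ (2^p·θ/(2 − 2^p))·‖x‖^p for all x ∈ A. -/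
set_option maxHeartbeats 1600000 in
/-- Hyers–Ulam–Rassias stability of Jordan ternary derivations, `p ∈ (0,1)`
(Corollary 2.8). -/
theorem jordan_ternary_derivation_stability_rpow {A X : Type*}
    [NormedAddCommGroup A] [NormedSpace ℂ A] [CompleteSpace A]
    [NormedAddCommGroup X] [NormedSpace ℂ X] [CompleteSpace X]
    (S : TernarySystem A X)
    (f : A → X) (p θ : ℝ) (hp0 : 0 < p) (hp1 : p < 1) (hθ : 0 ≤ θ)
    (hf1 : ∀ (μ : ℂ), ‖μ‖ = 1 → ∀ x y z : A,
      ‖μ • f (((3 : ℂ)⁻¹) • (x + y + z)) + μ • f (((3 : ℂ)⁻¹) • (x - 2 • y + z)) +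
          μ • f (((3 : ℂ)⁻¹) • (x + y - 2 • z)) - f (μ • x)‖ ≤
        θ * (‖x‖ ^ p + ‖y‖ ^ p + ‖z‖ ^ p))
    (hf2 : ∀ x : A,
      ‖f (S.tA x x x) - S.m1 (f x) x x - S.m2 x (f x) x - S.m3 x x (f x)‖ ≤
        3 * θ * ‖x‖ ^ p) :
    ∃! D : A → X, IsJordanTernaryDerivation S D ∧
      ∀ x : A, ‖f x - D x‖ ≤ ((2 : ℝ) ^ p * θ / (2 - (2 : ℝ) ^ p)) * ‖x‖ ^ p := by

  classical
  have h3c : ‖(3 : ℂ)‖ = 3 := by norm_num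
  -- Reformulated functional inequality
  have hE : ∀ s t u : A, ‖f (s + t + u) - f s - f t - f u‖ ≤
      θ * (‖s + t + u‖ ^ p + ‖s - t‖ ^ p + ‖s - u‖ ^ p) := by
    intro s t u
    have h := hf1 1 norm_one (s + t + u) (s - t) (s - u)
    rw [show ((3:ℂ)⁻¹) • ((s+t+u) + (s-t) + (s-u)) = s by match_scalars <;> norm_num,
        show ((3:ℂ)⁻¹) • ((s+t+u) - 2 • (s-t) + (s-u)) = t by match_scalars <;> norm_num,
        show ((3:ℂ)⁻¹) • ((s+t+u) + (s-t) - 2 • (s-u)) = u by match_scalars <;> norm_num] at h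
    simp only [one_smul] at h
    rw [show f (s+t+u) - f s - f t - f u = -(f s + f t + f u - f (s+t+u)) by abel, norm_neg]
    exact h
  have f0 : f 0 = 0 := by
    have h := hE 0 0 0
    simp only [add_zero, sub_zero, norm_zero, Real.zero_rpow hp0.ne', mul_zero, zero_add] at h
    have h2 := norm_le_zero_iff.mp h
    have h3 : (2:ℂ) • f 0 = 0 := by
      rw [show (2:ℂ) • f 0 = -(f 0 - f 0 - f 0 - f 0) by module, h2, neg_zero]
    simpa using (smul_eq_zero.mp h3).resolve_left (by norm_num)
  -- the cube step
  have key3 : ∀ y : A, ‖(3:ℂ) • f y - f ((3:ℂ) • y)‖ ≤ θ * ((3:ℝ) ^ p * ‖y‖ ^ p) := by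
    intro y
    have h := hE y y y
    rw [show y + y + y = (3:ℂ) • y by module] at h
    rw [show f ((3:ℂ)•y) - f y - f y - f y = -((3:ℂ) • f y - f ((3:ℂ)•y)) by module,
      norm_neg] at h
    rw [sub_self, norm_zero, Real.zero_rpow hp0.ne', norm_smul, h3c,
      Real.mul_rpow (by norm_num) (norm_nonneg y)] at h
    simpa using h
  have hcn : ∀ (n : ℕ) (x : A), ‖((3:ℂ)^n) • x‖ ^ p = ((3:ℝ)^p)^n * ‖x‖^p := by
    intro n x
    rw [norm_smul, norm_pow, h3c,
      Real.mul_rpow (by positivity) (norm_nonneg x),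
      ← Real.rpow_natCast (3:ℝ) n, ← Real.rpow_mul (by norm_num), mul_comm (n:ℝ) p,
      Real.rpow_mul (by norm_num), Real.rpow_natCast]
  have anorm : ∀ (n : ℕ) (v : X), ‖((3:ℂ)^n)⁻¹ • v‖ = ((3:ℝ)^n)⁻¹ * ‖v‖ := by
    intro n v; rw [norm_smul, norm_inv, norm_pow, h3c]
  set r : ℝ := (3:ℝ)^p / 3 with hrdef
  have h3p : (3:ℝ)^p < 3 := by
    calc (3:ℝ)^p < 3^(1:ℝ) := Real.rpow_lt_rpow_of_exponent_lt (by norm_num) hp1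
    _ = 3 := Real.rpow_one 3
  have h3p0 : (0:ℝ) < (3:ℝ)^p := Real.rpow_pos_of_pos (by norm_num) p
  have hr1 : r < 1 := by rw [hrdef, div_lt_one (by norm_num)]; exact h3p
  have hr0 : 0 ≤ r := by positivity
  have hstep : ∀ (x : A) (n : ℕ),
      dist (((3:ℂ)^n)⁻¹ • f ((3:ℂ)^n • x)) (((3:ℂ)^(n+1))⁻¹ • f ((3:ℂ)^(n+1) • x)) ≤
        (θ * (3:ℝ)^p * ‖x‖^p / 3) * r^n := by
    intro x n
    have hy := key3 ((3:ℂ)^n • x)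
    have e1 : (3:ℂ)^(n+1) • x = (3:ℂ) • ((3:ℂ)^n • x) := by
      rw [smul_smul, ← pow_succ']
    have e2 : ((3:ℂ)^n)⁻¹ • f ((3:ℂ)^n • x) - ((3:ℂ)^(n+1))⁻¹ • f ((3:ℂ)^(n+1) • x)
        = ((3:ℂ)^(n+1))⁻¹ • ((3:ℂ) • f ((3:ℂ)^n • x) - f ((3:ℂ)^(n+1) • x)) := by
      have h3n : ((3:ℂ)^(n+1)) ≠ 0 := pow_ne_zero _ (by norm_num)
      match_scalars
      · field_simp
        rw [pow_succ]
      · ring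
    rw [dist_eq_norm, e2, anorm, e1]
    calc ((3:ℝ)^(n+1))⁻¹ * ‖(3:ℂ) • f ((3:ℂ)^n • x) - f ((3:ℂ) • ((3:ℂ)^n • x))‖
        ≤ ((3:ℝ)^(n+1))⁻¹ * (θ * ((3:ℝ)^p * ‖(3:ℂ)^n • x‖^p)) :=
          mul_le_mul_of_nonneg_left hy (by positivity)
    _ = (θ * (3:ℝ)^p * ‖x‖^p / 3) * r^n := by
          rw [hcn, hrdef, div_pow]; field_simp; ring
  -- the limit map D
  have hDex : ∀ x : A, ∃ L : X,
      Filter.Tendsto (fun n : ℕ => ((3:ℂ)^n)⁻¹ • f ((3:ℂ)^n • x)) Filter.atTop (nhds L) :=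
    fun x => cauchySeq_tendsto_of_complete (cauchySeq_of_le_geometric r _ hr1 (hstep x))
  choose D hD using hDex
  have limzero : ∀ (g : ℕ → X) (L : X) (M : ℝ),
      Filter.Tendsto g Filter.atTop (nhds L) → (∀ n, ‖g n‖ ≤ M * r^n) → L = 0 := by
    intro g L M hg hb
    refine tendsto_nhds_unique hg (squeeze_zero_norm hb ?_)
    simpa using (tendsto_pow_atTop_nhds_zero_of_lt_one hr0 hr1).const_mul M
  -- additivity
  have Dadd : ∀ s t : A, D (s + t) = D s + D t := by
    intro s t
    have key : D (s + t) - D s - D t = 0 := by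
      refine limzero (fun n => ((3:ℂ)^n)⁻¹ • f ((3:ℂ)^n • (s+t)) -
          ((3:ℂ)^n)⁻¹ • f ((3:ℂ)^n • s) - ((3:ℂ)^n)⁻¹ • f ((3:ℂ)^n • t)) _
          (θ * (‖s+t‖^p + ‖s-t‖^p + ‖s‖^p)) (((hD (s+t)).sub (hD s)).sub (hD t)) ?_
      intro n
      have h := hE ((3:ℂ)^n • s) ((3:ℂ)^n • t) 0
      rw [add_zero, sub_zero, f0, sub_zero, ← smul_add, ← smul_sub] at h
      rw [hcn, hcn, hcn] at h
      have e : ((3:ℂ)^n)⁻¹ • f ((3:ℂ)^n • (s+t)) - ((3:ℂ)^n)⁻¹ • f ((3:ℂ)^n • s) -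
          ((3:ℂ)^n)⁻¹ • f ((3:ℂ)^n • t)
          = ((3:ℂ)^n)⁻¹ • (f ((3:ℂ)^n • (s+t)) - f ((3:ℂ)^n • s) -
            f ((3:ℂ)^n • t)) := by
        rw [smul_sub, smul_sub]
      rw [e, anorm]
      calc ((3:ℝ)^n)⁻¹ * ‖f ((3:ℂ)^n • (s+t)) - f ((3:ℂ)^n • s) - f ((3:ℂ)^n • t)‖
          ≤ ((3:ℝ)^n)⁻¹ * (θ * (((3:ℝ)^p)^n * ‖s+t‖^p + ((3:ℝ)^p)^n * ‖s-t‖^p +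
              ((3:ℝ)^p)^n * ‖s‖^p)) := mul_le_mul_of_nonneg_left h (by positivity)
      _ = (θ * (‖s+t‖^p + ‖s-t‖^p + ‖s‖^p)) * r^n := by
            rw [hrdef, div_pow]; field_simp
    rw [sub_sub, sub_eq_zero] at key
    rw [key]
  have Dzero : D 0 = 0 := by
    have h := Dadd 0 0
    rw [add_zero] at h
    exact (left_eq_add.mp h)
  -- homogeneity for unit scalars
  have Dsmul1 : ∀ (μ : ℂ), ‖μ‖ = 1 → ∀ x : A, D (μ • x) = μ • D x := by
    intro μ hμ x
    have key : μ • D x - D (μ • x) = 0 := by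
      refine limzero (fun n => μ • (((3:ℂ)^n)⁻¹ • f ((3:ℂ)^n • x)) -
          ((3:ℂ)^(n+1))⁻¹ • f ((3:ℂ)^(n+1) • (μ • x))) _ (θ * (3:ℝ)^p * ‖x‖^p)
          (((hD x).const_smul μ).sub ((hD (μ • x)).comp (Filter.tendsto_add_atTop_nat 1))) ?_
      intro n
      have h := hf1 μ hμ ((3:ℂ)^(n+1) • x) 0 0
      rw [show ((3:ℂ)⁻¹) • ((3:ℂ)^(n+1) • x + 0 + 0) = (3:ℂ)^n • x by
            match_scalars; field_simp [pow_succ]; try ring,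
          show ((3:ℂ)⁻¹) • ((3:ℂ)^(n+1) • x - 2 • (0:A) + 0) = (3:ℂ)^n • x by
            match_scalars; field_simp [pow_succ]; try ring,
          show ((3:ℂ)⁻¹) • ((3:ℂ)^(n+1) • x + 0 - 2 • (0:A)) = (3:ℂ)^n • x by
            match_scalars; field_simp [pow_succ]; try ring,
          show μ • ((3:ℂ)^(n+1) • x) = (3:ℂ)^(n+1) • (μ • x) from smul_comm _ _ _,
          norm_zero, Real.zero_rpow hp0.ne', add_zero, add_zero, hcn] at h
      have e : μ • (((3:ℂ)^n)⁻¹ • f ((3:ℂ)^n • x)) -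
          ((3:ℂ)^(n+1))⁻¹ • f ((3:ℂ)^(n+1) • (μ • x))
          = ((3:ℂ)^(n+1))⁻¹ • (μ • f ((3:ℂ)^n • x) + μ • f ((3:ℂ)^n • x) +
            μ • f ((3:ℂ)^n • x) - f ((3:ℂ)^(n+1) • (μ • x))) := by
        have h3n : ((3:ℂ)^(n+1)) ≠ 0 := pow_ne_zero _ (by norm_num)
        match_scalars
        · field_simp
          rw [pow_succ]; ring
        · ring
      rw [e, anorm]
      calc ((3:ℝ)^(n+1))⁻¹ * ‖μ • f ((3:ℂ)^n • x) + μ • f ((3:ℂ)^n • x) +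
            μ • f ((3:ℂ)^n • x) - f ((3:ℂ)^(n+1) • (μ • x))‖
          ≤ ((3:ℝ)^(n+1))⁻¹ * (θ * (((3:ℝ)^p)^(n+1) * ‖x‖^p)) :=
            mul_le_mul_of_nonneg_left h (by positivity)
      _ = (θ * (3:ℝ)^p * ‖x‖^p / 3) * r^n := by
            rw [hrdef, div_pow]; field_simp; ring
      _ ≤ (θ * (3:ℝ)^p * ‖x‖^p) * r^n := by
            have h1 : (0:ℝ) ≤ r^n := by positivity
            have h2 : (0:ℝ) ≤ θ * (3:ℝ)^p * ‖x‖^p :=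
              mul_nonneg (mul_nonneg hθ h3p0.le) (Real.rpow_nonneg (norm_nonneg x) p)
            nlinarith [mul_nonneg h2 h1]
    rw [sub_eq_zero] at key
    exact key.symm
  -- ℂ-linearity
  have Dnat : ∀ (n : ℕ) (y : A), D ((n:ℂ) • y) = (n:ℂ) • D y := by
    intro n
    induction n with
    | zero => intro y; simp [Dzero]
    | succ k ih =>
      intro y
      have e : ((k+1:ℕ):ℂ) • y = (k:ℂ) • y + y := by push_cast; rw [add_smul, one_smul]
      rw [e, Dadd, ih]; push_cast; rw [add_smul, one_smul]
  have D2inv : ∀ x : A, D ((2:ℂ)⁻¹ • x) = (2:ℂ)⁻¹ • D x := by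
    intro x
    have h2 : D ((2:ℂ) • ((2:ℂ)⁻¹ • x)) = (2:ℂ) • D ((2:ℂ)⁻¹ • x) := by
      rw [show (2:ℂ) • ((2:ℂ)⁻¹ • x) = (2:ℂ)⁻¹ • x + (2:ℂ)⁻¹ • x by module, Dadd, two_smul]
    rw [smul_smul, show (2:ℂ) * 2⁻¹ = 1 by norm_num, one_smul] at h2
    rw [h2, smul_smul, show (2:ℂ)⁻¹ * 2 = 1 by norm_num, one_smul]
  have Dreal_small : ∀ (t : ℝ), |t| ≤ 1 → ∀ x : A, D ((t:ℂ) • x) = (t:ℂ) • D x := by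
    intro t ht x
    have h1t : (0:ℝ) ≤ 1 - t^2 := by
      obtain ⟨h1, h2⟩ := abs_le.mp ht; nlinarith
    set μ : ℂ := (t:ℂ) + (Real.sqrt (1 - t^2) : ℝ) * Complex.I with hμdef
    have hre : μ.re = t := by simp [hμdef]
    have hμ : ‖μ‖ = 1 := by
      rw [hμdef, Complex.norm_add_mul_I,
        Real.sq_sqrt h1t, show t^2 + (1 - t^2) = 1 by ring, Real.sqrt_one]
    have hμc : ‖(starRingEnd ℂ) μ‖ = 1 := by rw [RCLike.norm_conj]; exact hμ
    have hsc : (t:ℂ) = (2:ℂ)⁻¹ * (μ + (starRingEnd ℂ) μ) := by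
      rw [Complex.add_conj, hre]; push_cast; ring
    have e : (t:ℂ) • x = (2:ℂ)⁻¹ • (μ • x + (starRingEnd ℂ) μ • x) := by
      rw [← add_smul, smul_smul, ← hsc]
    rw [e, D2inv, Dadd, Dsmul1 μ hμ, Dsmul1 _ hμc, ← add_smul, smul_smul, ← hsc]
  have Dreal : ∀ (t : ℝ) (x : A), D ((t:ℂ) • x) = (t:ℂ) • D x := by
    intro t x
    set n : ℕ := ⌈|t|⌉₊ + 1 with hn
    have hn0 : (0:ℝ) < (n:ℝ) := by positivity
    have hnc : ((n:ℝ)) ≠ 0 := hn0.ne'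
    have hncc : ((n:ℂ)) ≠ 0 := by exact_mod_cast (Nat.cast_ne_zero (R := ℝ)).mp hnc
    have habs : |t / (n:ℝ)| ≤ 1 := by
      rw [abs_div, abs_of_pos hn0, div_le_one hn0]
      calc |t| ≤ (⌈|t|⌉₊ : ℝ) := Nat.le_ceil _
      _ ≤ (n:ℝ) := by rw [hn]; push_cast; linarith
    have hnc3 : ((⌈|t|⌉₊:ℂ) + 1) ≠ 0 := by
      have h1 : (0:ℝ) < (⌈|t|⌉₊:ℝ) + 1 := by positivity
      exact_mod_cast h1.ne'
    have e : (t:ℂ) • x = (n:ℂ) • (((t/(n:ℝ) : ℝ):ℂ) • x) := by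
      rw [smul_smul]; congr 1; push_cast; field_simp
    rw [e, Dnat, Dreal_small _ habs, smul_smul]
    congr 1; push_cast; field_simp
  have Dsmul : ∀ (c : ℂ) (x : A), D (c • x) = c • D x := by
    intro c x
    have hI : ‖Complex.I‖ = 1 := Complex.norm_I
    have e : c • x = (c.re : ℂ) • x + (c.im : ℂ) • (Complex.I • x) := by
      rw [smul_smul, ← add_smul, Complex.re_add_im]
    rw [e, Dadd, Dreal, Dreal, Dsmul1 _ hI, smul_smul, ← add_smul, Complex.re_add_im]
  have hlin : IsLinearMap ℂ D := ⟨Dadd, fun c x => Dsmul c x⟩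
  -- Jordan property
  have hJord : ∀ x : A, D (S.tA x x x) =
      S.m1 (D x) x x + S.m2 x (D x) x + S.m3 x x (D x) := by
    intro x
    set T : A := S.tA x x x with hT
    have hmul3 : Filter.Tendsto (fun n : ℕ => 3 * n) Filter.atTop Filter.atTop :=
      Filter.tendsto_atTop_mono (fun n => Nat.le_mul_of_pos_left n (by norm_num))
        Filter.tendsto_id
    have hT3 : Filter.Tendsto (fun n : ℕ => ((3:ℂ)^(3*n))⁻¹ • f ((3:ℂ)^(3*n) • T))
        Filter.atTop (nhds (D T)) := (hD T).comp hmul3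
    -- continuity of the module actions in the X-slot
    have cm1 : Filter.Tendsto (fun n : ℕ => S.m1 (((3:ℂ)^n)⁻¹ • f ((3:ℂ)^n • x)) x x)
        Filter.atTop (nhds (S.m1 (D x) x x)) := by
      rw [tendsto_iff_norm_sub_tendsto_zero]
      refine squeeze_zero (g := fun n => ‖((3:ℂ)^n)⁻¹ • f ((3:ℂ)^n • x) - D x‖ *
        (‖x‖ * ‖x‖)) (fun n => norm_nonneg _) (fun n => ?_) ?_
      · have e : S.m1 (((3:ℂ)^n)⁻¹ • f ((3:ℂ)^n • x)) x x - S.m1 (D x) x x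
            = S.m1 (((3:ℂ)^n)⁻¹ • f ((3:ℂ)^n • x) - D x) x x :=
          ((S.m1_lin1 x x).map_sub _ _).symm
        rw [e]
        calc ‖S.m1 (((3:ℂ)^n)⁻¹ • f ((3:ℂ)^n • x) - D x) x x‖
            ≤ ‖((3:ℂ)^n)⁻¹ • f ((3:ℂ)^n • x) - D x‖ * ‖x‖ * ‖x‖ := S.norm_m1 _ _ _
        _ = _ := by ring
      · simpa using (tendsto_iff_norm_sub_tendsto_zero.mp (hD x)).mul_const (‖x‖ * ‖x‖)
    have cm2 : Filter.Tendsto (fun n : ℕ => S.m2 x (((3:ℂ)^n)⁻¹ • f ((3:ℂ)^n • x)) x)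
        Filter.atTop (nhds (S.m2 x (D x) x)) := by
      rw [tendsto_iff_norm_sub_tendsto_zero]
      refine squeeze_zero (g := fun n => ‖((3:ℂ)^n)⁻¹ • f ((3:ℂ)^n • x) - D x‖ *
        (‖x‖ * ‖x‖)) (fun n => norm_nonneg _) (fun n => ?_) ?_
      · have e : S.m2 x (((3:ℂ)^n)⁻¹ • f ((3:ℂ)^n • x)) x - S.m2 x (D x) x
            = S.m2 x (((3:ℂ)^n)⁻¹ • f ((3:ℂ)^n • x) - D x) x :=
          ((S.m2_lin2 x x).map_sub _ _).symm
        rw [e]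
        calc ‖S.m2 x (((3:ℂ)^n)⁻¹ • f ((3:ℂ)^n • x) - D x) x‖
            ≤ ‖x‖ * ‖((3:ℂ)^n)⁻¹ • f ((3:ℂ)^n • x) - D x‖ * ‖x‖ := S.norm_m2 _ _ _
        _ = _ := by ring
      · simpa using (tendsto_iff_norm_sub_tendsto_zero.mp (hD x)).mul_const (‖x‖ * ‖x‖)
    have cm3 : Filter.Tendsto (fun n : ℕ => S.m3 x x (((3:ℂ)^n)⁻¹ • f ((3:ℂ)^n • x)))
        Filter.atTop (nhds (S.m3 x x (D x))) := by
      rw [tendsto_iff_norm_sub_tendsto_zero]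
      refine squeeze_zero (g := fun n => ‖((3:ℂ)^n)⁻¹ • f ((3:ℂ)^n • x) - D x‖ *
        (‖x‖ * ‖x‖)) (fun n => norm_nonneg _) (fun n => ?_) ?_
      · have e : S.m3 x x (((3:ℂ)^n)⁻¹ • f ((3:ℂ)^n • x)) - S.m3 x x (D x)
            = S.m3 x x (((3:ℂ)^n)⁻¹ • f ((3:ℂ)^n • x) - D x) :=
          ((S.m3_lin3 x x).map_sub _ _).symm
        rw [e]
        calc ‖S.m3 x x (((3:ℂ)^n)⁻¹ • f ((3:ℂ)^n • x) - D x)‖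
            ≤ ‖x‖ * ‖x‖ * ‖((3:ℂ)^n)⁻¹ • f ((3:ℂ)^n • x) - D x‖ := S.norm_m3 _ _ _
        _ = _ := by ring
      · simpa using (tendsto_iff_norm_sub_tendsto_zero.mp (hD x)).mul_const (‖x‖ * ‖x‖)
    have key : D T - S.m1 (D x) x x - S.m2 x (D x) x - S.m3 x x (D x) = 0 := by
      refine limzero (fun n => ((3:ℂ)^(3*n))⁻¹ • f ((3:ℂ)^(3*n) • T) -
          S.m1 (((3:ℂ)^n)⁻¹ • f ((3:ℂ)^n • x)) x x -
          S.m2 x (((3:ℂ)^n)⁻¹ • f ((3:ℂ)^n • x)) x -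
          S.m3 x x (((3:ℂ)^n)⁻¹ • f ((3:ℂ)^n • x))) _ (3 * θ * ‖x‖^p)
          (((hT3.sub cm1).sub cm2).sub cm3) ?_
      intro n
      have h3n : ((3:ℂ)^n) ≠ 0 := pow_ne_zero _ (by norm_num)
      have hsc : ((3:ℂ)^(3*n))⁻¹ * (3:ℂ)^n * (3:ℂ)^n = ((3:ℂ)^n)⁻¹ := by
        rw [show 3*n = n + (n + n) by ring, pow_add, pow_add]
        field_simp
      have etA : S.tA ((3:ℂ)^n • x) ((3:ℂ)^n • x) ((3:ℂ)^n • x) = (3:ℂ)^(3*n) • T := by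
        have q1 : S.tA ((3:ℂ)^n • x) ((3:ℂ)^n • x) ((3:ℂ)^n • x)
            = (3:ℂ)^n • S.tA x ((3:ℂ)^n • x) ((3:ℂ)^n • x) :=
          (S.tA_lin1 _ _).map_smul _ _
        have q2 : S.tA x ((3:ℂ)^n • x) ((3:ℂ)^n • x)
            = (3:ℂ)^n • S.tA x x ((3:ℂ)^n • x) := (S.tA_lin2 _ _).map_smul _ _
        have q3 : S.tA x x ((3:ℂ)^n • x) = (3:ℂ)^n • T := (S.tA_lin3 _ _).map_smul _ _
        rw [q1, q2, q3, smul_smul, smul_smul]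
        congr 1
        rw [show 3*n = n + (n + n) by ring, pow_add, pow_add]
        ring
      have p1 : ((3:ℂ)^(3*n))⁻¹ • S.m1 (f ((3:ℂ)^n • x)) ((3:ℂ)^n • x) ((3:ℂ)^n • x)
          = S.m1 (((3:ℂ)^n)⁻¹ • f ((3:ℂ)^n • x)) x x := by
        have q1 : S.m1 (f ((3:ℂ)^n • x)) ((3:ℂ)^n • x) ((3:ℂ)^n • x)
            = (3:ℂ)^n • S.m1 (f ((3:ℂ)^n • x)) x ((3:ℂ)^n • x) :=
          (S.m1_lin2 _ _).map_smul _ _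
        have q2 : S.m1 (f ((3:ℂ)^n • x)) x ((3:ℂ)^n • x)
            = (3:ℂ)^n • S.m1 (f ((3:ℂ)^n • x)) x x := (S.m1_lin3 _ _).map_smul _ _
        have q3 : S.m1 (((3:ℂ)^n)⁻¹ • f ((3:ℂ)^n • x)) x x
            = ((3:ℂ)^n)⁻¹ • S.m1 (f ((3:ℂ)^n • x)) x x := (S.m1_lin1 _ _).map_smul _ _
        rw [q1, q2, smul_smul, smul_smul, hsc, ← q3]
      have p2 : ((3:ℂ)^(3*n))⁻¹ • S.m2 ((3:ℂ)^n • x) (f ((3:ℂ)^n • x)) ((3:ℂ)^n • x)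
          = S.m2 x (((3:ℂ)^n)⁻¹ • f ((3:ℂ)^n • x)) x := by
        have q1 : S.m2 ((3:ℂ)^n • x) (f ((3:ℂ)^n • x)) ((3:ℂ)^n • x)
            = (3:ℂ)^n • S.m2 x (f ((3:ℂ)^n • x)) ((3:ℂ)^n • x) :=
          (S.m2_lin1 _ _).map_smul _ _
        have q2 : S.m2 x (f ((3:ℂ)^n • x)) ((3:ℂ)^n • x)
            = (3:ℂ)^n • S.m2 x (f ((3:ℂ)^n • x)) x := (S.m2_lin3 _ _).map_smul _ _
        have q3 : S.m2 x (((3:ℂ)^n)⁻¹ • f ((3:ℂ)^n • x)) x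
            = ((3:ℂ)^n)⁻¹ • S.m2 x (f ((3:ℂ)^n • x)) x := (S.m2_lin2 _ _).map_smul _ _
        rw [q1, q2, smul_smul, smul_smul, hsc, ← q3]
      have p3 : ((3:ℂ)^(3*n))⁻¹ • S.m3 ((3:ℂ)^n • x) ((3:ℂ)^n • x) (f ((3:ℂ)^n • x))
          = S.m3 x x (((3:ℂ)^n)⁻¹ • f ((3:ℂ)^n • x)) := by
        have q1 : S.m3 ((3:ℂ)^n • x) ((3:ℂ)^n • x) (f ((3:ℂ)^n • x))
            = (3:ℂ)^n • S.m3 x ((3:ℂ)^n • x) (f ((3:ℂ)^n • x)) :=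
          (S.m3_lin1 _ _).map_smul _ _
        have q2 : S.m3 x ((3:ℂ)^n • x) (f ((3:ℂ)^n • x))
            = (3:ℂ)^n • S.m3 x x (f ((3:ℂ)^n • x)) := (S.m3_lin2 _ _).map_smul _ _
        have q3 : S.m3 x x (((3:ℂ)^n)⁻¹ • f ((3:ℂ)^n • x))
            = ((3:ℂ)^n)⁻¹ • S.m3 x x (f ((3:ℂ)^n • x)) := (S.m3_lin3 _ _).map_smul _ _
        rw [q1, q2, smul_smul, smul_smul, hsc, ← q3]
      have eb : ((3:ℂ)^(3*n))⁻¹ • f ((3:ℂ)^(3*n) • T) -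
          S.m1 (((3:ℂ)^n)⁻¹ • f ((3:ℂ)^n • x)) x x -
          S.m2 x (((3:ℂ)^n)⁻¹ • f ((3:ℂ)^n • x)) x -
          S.m3 x x (((3:ℂ)^n)⁻¹ • f ((3:ℂ)^n • x))
          = ((3:ℂ)^(3*n))⁻¹ • (f (S.tA ((3:ℂ)^n • x) ((3:ℂ)^n • x) ((3:ℂ)^n • x)) -
            S.m1 (f ((3:ℂ)^n • x)) ((3:ℂ)^n • x) ((3:ℂ)^n • x) -
            S.m2 ((3:ℂ)^n • x) (f ((3:ℂ)^n • x)) ((3:ℂ)^n • x) -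
            S.m3 ((3:ℂ)^n • x) ((3:ℂ)^n • x) (f ((3:ℂ)^n • x))) := by
        rw [smul_sub, smul_sub, smul_sub, p1, p2, p3, etA]
      rw [eb, anorm]
      have h := hf2 ((3:ℂ)^n • x)
      rw [hcn] at h
      calc ((3:ℝ)^(3*n))⁻¹ * ‖f (S.tA ((3:ℂ)^n • x) ((3:ℂ)^n • x) ((3:ℂ)^n • x)) -
            S.m1 (f ((3:ℂ)^n • x)) ((3:ℂ)^n • x) ((3:ℂ)^n • x) -
            S.m2 ((3:ℂ)^n • x) (f ((3:ℂ)^n • x)) ((3:ℂ)^n • x) -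
            S.m3 ((3:ℂ)^n • x) ((3:ℂ)^n • x) (f ((3:ℂ)^n • x))‖
          ≤ ((3:ℝ)^(3*n))⁻¹ * (3 * θ * (((3:ℝ)^p)^n * ‖x‖^p)) :=
            mul_le_mul_of_nonneg_left h (by positivity)
      _ ≤ ((3:ℝ)^n)⁻¹ * (3 * θ * (((3:ℝ)^p)^n * ‖x‖^p)) := by
            have hle : ((3:ℝ)^(3*n))⁻¹ ≤ ((3:ℝ)^n)⁻¹ :=
              inv_anti₀ (by positivity)
                (pow_le_pow_right₀ (by norm_num) (by omega))
            exact mul_le_mul_of_nonneg_right hle (by positivity)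
      _ = (3 * θ * ‖x‖^p) * r^n := by
            rw [hrdef, div_pow]; field_simp
    rw [sub_sub, sub_sub, sub_eq_zero] at key
    rw [key]; abel
  -- the approximation bound
  have h2p : (2:ℝ)^p < 2 := by
    calc (2:ℝ)^p < 2^(1:ℝ) := Real.rpow_lt_rpow_of_exponent_lt (by norm_num) hp1
    _ = 2 := Real.rpow_one 2
  have h2p0 : (0:ℝ) < (2:ℝ)^p := Real.rpow_pos_of_pos (by norm_num) p
  have h23 : 2 * (3:ℝ)^p ≤ 3 * (2:ℝ)^p := by
    have h := Real.rpow_le_rpow_of_exponent_le (show (1:ℝ) ≤ 3/2 by norm_num) hp1.le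
    rw [Real.rpow_one, Real.div_rpow (by norm_num) (by norm_num),
      div_le_div_iff₀ h2p0 (by norm_num)] at h
    linarith
  have hbound : ∀ x : A, ‖f x - D x‖ ≤ ((2:ℝ)^p * θ / (2 - (2:ℝ)^p)) * ‖x‖^p := by
    intro x
    have h1 := dist_le_of_le_geometric_of_tendsto₀ r (θ * (3:ℝ)^p * ‖x‖^p / 3) hr1
      (hstep x) (hD x)
    simp only [pow_zero, inv_one, one_smul] at h1
    rw [dist_eq_norm] at h1
    have hkey : θ * (3:ℝ)^p / (3 - (3:ℝ)^p) ≤ (2:ℝ)^p * θ / (2 - (2:ℝ)^p) := by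
      rw [div_le_div_iff₀ (by linarith) (by linarith)]
      nlinarith [mul_nonneg hθ (show (0:ℝ) ≤ 3*(2:ℝ)^p - 2*(3:ℝ)^p by linarith)]
    calc ‖f x - D x‖ ≤ θ * (3:ℝ)^p * ‖x‖^p / 3 / (1 - r) := h1
    _ = (θ * (3:ℝ)^p / (3 - (3:ℝ)^p)) * ‖x‖^p := by
        rw [hrdef]
        have hne : (3:ℝ) - (3:ℝ)^p ≠ 0 := by linarith
        field_simp
        try ring
    _ ≤ ((2:ℝ)^p * θ / (2 - (2:ℝ)^p)) * ‖x‖^p :=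
        mul_le_mul_of_nonneg_right hkey (Real.rpow_nonneg (norm_nonneg x) p)
  refine ⟨D, ⟨⟨hlin, hJord⟩, hbound⟩, ?_⟩
  rintro D' ⟨⟨hlin', _⟩, hb'⟩
  funext x
  have tri : ∀ u v w : X, ‖u - v‖ ≤ ‖w - u‖ + ‖w - v‖ := by
    intro u v w
    calc ‖u - v‖ = ‖-(w - u) + (w - v)‖ := by congr 1; abel
    _ ≤ ‖-(w - u)‖ + ‖w - v‖ := norm_add_le _ _
    _ = ‖w - u‖ + ‖w - v‖ := by rw [norm_neg]
  have hKx : ∀ n : ℕ, ‖D' x - D x‖ ≤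
      (2 * ((2:ℝ)^p * θ / (2 - (2:ℝ)^p)) * ‖x‖^p) * r^n := by
    intro n
    have hb1 := hb' ((3:ℂ)^n • x)
    have hb2 := hbound ((3:ℂ)^n • x)
    rw [hcn] at hb1 hb2
    calc ‖D' x - D x‖ = ((3:ℝ)^n)⁻¹ * ‖D' ((3:ℂ)^n • x) - D ((3:ℂ)^n • x)‖ := by
          rw [hlin'.map_smul, hlin.map_smul, ← smul_sub, norm_smul, norm_pow, h3c,
            inv_mul_cancel_left₀ (by positivity)]
    _ ≤ ((3:ℝ)^n)⁻¹ * (‖f ((3:ℂ)^n • x) - D' ((3:ℂ)^n • x)‖ +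
          ‖f ((3:ℂ)^n • x) - D ((3:ℂ)^n • x)‖) :=
        mul_le_mul_of_nonneg_left (tri _ _ _) (by positivity)
    _ ≤ ((3:ℝ)^n)⁻¹ * (((2:ℝ)^p * θ / (2 - (2:ℝ)^p)) * (((3:ℝ)^p)^n * ‖x‖^p) +
          ((2:ℝ)^p * θ / (2 - (2:ℝ)^p)) * (((3:ℝ)^p)^n * ‖x‖^p)) :=
        mul_le_mul_of_nonneg_left (add_le_add hb1 hb2) (by positivity)
    _ = (2 * ((2:ℝ)^p * θ / (2 - (2:ℝ)^p)) * ‖x‖^p) * r^n := by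
        rw [hrdef, div_pow]; field_simp; ring
  have htend0 : Filter.Tendsto
      (fun n : ℕ => (2 * ((2:ℝ)^p * θ / (2 - (2:ℝ)^p)) * ‖x‖^p) * r^n)
      Filter.atTop (nhds 0) := by
    simpa using (tendsto_pow_atTop_nhds_zero_of_lt_one hr0 hr1).const_mul
      (2 * ((2:ℝ)^p * θ / (2 - (2:ℝ)^p)) * ‖x‖^p)
  have h0 : ‖D' x - D x‖ ≤ 0 := ge_of_tendsto' htend0 hKx
  exact sub_eq_zero.mp (norm_le_zero_iff.mp h0)
end

section
/- Let D : A → X be a limit D(x) = lim_{n→∞} f(3ⁿx)/3ⁿ where f : A → X satisfies ‖f([a,b,c]) − [f(a),b,c] − [a,f(b),c] − [a,b,f(c)]‖ ≤ φ(a,b,c) with lim_{n→∞} 3^{−n}·φ(3ⁿa, 3ⁿb, 3ⁿc) = 0 for all a,b,c, and where the ternary products are trilinear and bounded (‖[u,v,w]‖ ≤ ‖u‖‖v‖‖w‖). Then D satisfies D([x,y,z]) = [D(x),y,z] + [x,D(y),z] + [x,y,D(z)] for all x,y,z ∈ A. -/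
/-- If `D(x) = lim f(3ⁿx)/3ⁿ` where `f` is an approximate ternary derivation
with vanishing scaled control function, then `D` satisfies the exact ternary
Leibniz identity. -/
theorem limit_is_ternary_derivation {A X : Type*}
    [NormedAddCommGroup A] [NormedSpace ℂ A] [CompleteSpace A]
    [NormedAddCommGroup X] [NormedSpace ℂ X] [CompleteSpace X]
    (S : TernarySystem A X)
    (f : A → X) (D : A → X) (φ : A → A → A → ℝ)
    (hφ : ∀ a b c, 0 ≤ φ a b c)
    (hf : ∀ a b c : A,
      ‖f (S.tA a b c) - S.m1 (f a) b c - S.m2 a (f b) c - S.m3 a b (f c)‖ ≤ φ a b c)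
    (hvan : ∀ a b c : A,
      Filter.Tendsto (fun n : ℕ => ((3 : ℝ) ^ n)⁻¹ * φ ((3 : ℂ) ^ n • a) ((3 : ℂ) ^ n • b) ((3 : ℂ) ^ n • c))
        Filter.atTop (nhds 0))
    (hD : ∀ x : A,
      Filter.Tendsto (fun n : ℕ => ((3 : ℂ) ^ n)⁻¹ • f ((3 : ℂ) ^ n • x))
        Filter.atTop (nhds (D x))) :
    ∀ x y z : A, D (S.tA x y z) = S.m1 (D x) y z + S.m2 x (D y) z + S.m3 x y (D z) := by

  intro x y z
  set w := S.tA x y z with hw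
  have h3 : Filter.Tendsto (fun n : ℕ => 3 * n) Filter.atTop Filter.atTop :=
    Filter.tendsto_atTop_atTop.mpr (fun b => ⟨b, fun n hn => by omega⟩)
  have hEw : Filter.Tendsto (fun n : ℕ => ((3:ℂ)^(3*n))⁻¹ • f ((3:ℂ)^(3*n) • w))
      Filter.atTop (nhds (D w)) := (hD w).comp h3
  -- rewrite the argument using trilinearity
  have hkey : ∀ n : ℕ, (3:ℂ)^(3*n) • w
      = S.tA ((3:ℂ)^n • x) ((3:ℂ)^n • y) ((3:ℂ)^n • z) := by
    intro n
    have h1 := (S.tA_lin1 ((3:ℂ)^n • y) ((3:ℂ)^n • z)).map_smul ((3:ℂ)^n) x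
    have h2 := (S.tA_lin2 x ((3:ℂ)^n • z)).map_smul ((3:ℂ)^n) y
    have h3' := (S.tA_lin3 x y).map_smul ((3:ℂ)^n) z
    rw [h1, h2, h3', smul_smul, smul_smul, ← pow_add, ← pow_add, hw]
    ring_nf
  -- the difference term
  have hM1 : ∀ n : ℕ, ((3:ℂ)^(3*n))⁻¹ • S.m1 (f ((3:ℂ)^n • x)) ((3:ℂ)^n • y) ((3:ℂ)^n • z)
      = S.m1 (((3:ℂ)^n)⁻¹ • f ((3:ℂ)^n • x)) y z := by
    intro n
    have h2 := (S.m1_lin2 (f ((3:ℂ)^n • x)) ((3:ℂ)^n • z)).map_smul ((3:ℂ)^n) y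
    have h3' := (S.m1_lin3 (f ((3:ℂ)^n • x)) y).map_smul ((3:ℂ)^n) z
    have h1 := (S.m1_lin1 y z).map_smul (((3:ℂ)^n)⁻¹) (f ((3:ℂ)^n • x))
    rw [h2, h3', h1, smul_smul, smul_smul]
    congr 1
    have h30 : (3:ℂ) ≠ 0 := by norm_num
    field_simp
    ring_nf
  have hM2 : ∀ n : ℕ, ((3:ℂ)^(3*n))⁻¹ • S.m2 ((3:ℂ)^n • x) (f ((3:ℂ)^n • y)) ((3:ℂ)^n • z)
      = S.m2 x (((3:ℂ)^n)⁻¹ • f ((3:ℂ)^n • y)) z := by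
    intro n
    have h1 := (S.m2_lin1 (f ((3:ℂ)^n • y)) ((3:ℂ)^n • z)).map_smul ((3:ℂ)^n) x
    have h3' := (S.m2_lin3 x (f ((3:ℂ)^n • y))).map_smul ((3:ℂ)^n) z
    have h2 := (S.m2_lin2 x z).map_smul (((3:ℂ)^n)⁻¹) (f ((3:ℂ)^n • y))
    rw [h1, h3', h2, smul_smul, smul_smul]
    congr 1
    have h30 : (3:ℂ) ≠ 0 := by norm_num
    field_simp
    ring_nf
  have hM3 : ∀ n : ℕ, ((3:ℂ)^(3*n))⁻¹ • S.m3 ((3:ℂ)^n • x) ((3:ℂ)^n • y) (f ((3:ℂ)^n • z))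
      = S.m3 x y (((3:ℂ)^n)⁻¹ • f ((3:ℂ)^n • z)) := by
    intro n
    have h1 := (S.m3_lin1 ((3:ℂ)^n • y) (f ((3:ℂ)^n • z))).map_smul ((3:ℂ)^n) x
    have h2 := (S.m3_lin2 x (f ((3:ℂ)^n • z))).map_smul ((3:ℂ)^n) y
    have h3' := (S.m3_lin3 x y).map_smul (((3:ℂ)^n)⁻¹) (f ((3:ℂ)^n • z))
    rw [h1, h2, h3', smul_smul, smul_smul]
    congr 1
    have h30 : (3:ℂ) ≠ 0 := by norm_num
    field_simp
    ring_nf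
  set E : ℕ → X := fun n => ((3:ℂ)^(3*n))⁻¹ • f ((3:ℂ)^(3*n) • w) with hE
  set c1 : ℕ → X := fun n => S.m1 (((3:ℂ)^n)⁻¹ • f ((3:ℂ)^n • x)) y z
  set c2 : ℕ → X := fun n => S.m2 x (((3:ℂ)^n)⁻¹ • f ((3:ℂ)^n • y)) z
  set c3 : ℕ → X := fun n => S.m3 x y (((3:ℂ)^n)⁻¹ • f ((3:ℂ)^n • z))
  -- the error goes to 0
  have herr : Filter.Tendsto (fun n => E n - c1 n - c2 n - c3 n) Filter.atTop (nhds 0) := by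
    have hb : ∀ n : ℕ, ‖E n - c1 n - c2 n - c3 n‖
        ≤ ((3:ℝ)^n)⁻¹ * φ ((3:ℂ)^n • x) ((3:ℂ)^n • y) ((3:ℂ)^n • z) := by
      intro n
      have heq : E n - c1 n - c2 n - c3 n = ((3:ℂ)^(3*n))⁻¹ •
          (f (S.tA ((3:ℂ)^n • x) ((3:ℂ)^n • y) ((3:ℂ)^n • z))
            - S.m1 (f ((3:ℂ)^n • x)) ((3:ℂ)^n • y) ((3:ℂ)^n • z)
            - S.m2 ((3:ℂ)^n • x) (f ((3:ℂ)^n • y)) ((3:ℂ)^n • z)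
            - S.m3 ((3:ℂ)^n • x) ((3:ℂ)^n • y) (f ((3:ℂ)^n • z))) := by
        simp only [smul_sub, hM1 n, hM2 n, hM3 n, hE, hkey n, c1, c2, c3]
      rw [heq, norm_smul]
      have hnorm : ‖((3:ℂ)^(3*n))⁻¹‖ = ((3:ℝ)^(3*n))⁻¹ := by
        rw [norm_inv, norm_pow]
        norm_num
      rw [hnorm]
      have hle1 : ((3:ℝ)^(3*n))⁻¹ ≤ ((3:ℝ)^n)⁻¹ := by
        apply inv_anti₀ (by positivity)
        exact pow_le_pow_right₀ (by norm_num) (by omega)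
      exact mul_le_mul hle1 (hf _ _ _) (norm_nonneg _)
        (by positivity)
    have h0 : ∀ n : ℕ, (0:ℝ) ≤ ‖E n - c1 n - c2 n - c3 n‖ := fun n => norm_nonneg _
    have := squeeze_zero h0 hb (hvan x y z)
    exact tendsto_zero_iff_norm_tendsto_zero.mpr this
  -- each c_i converges
  have hc1 : Filter.Tendsto c1 Filter.atTop (nhds (S.m1 (D x) y z)) := by
    rw [tendsto_iff_norm_sub_tendsto_zero]
    apply squeeze_zero (fun n => norm_nonneg _)
      (g := fun n => ‖(((3:ℂ)^n)⁻¹ • f ((3:ℂ)^n • x)) - D x‖ * ‖y‖ * ‖z‖)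
    · intro n
      have hlin := (S.m1_lin1 y z).map_add
      have : c1 n - S.m1 (D x) y z
          = S.m1 ((((3:ℂ)^n)⁻¹ • f ((3:ℂ)^n • x)) - D x) y z := by
        have := (S.m1_lin1 y z).map_sub (((3:ℂ)^n)⁻¹ • f ((3:ℂ)^n • x)) (D x)
        rw [this]
      rw [this]
      exact S.norm_m1 _ _ _
    · have := (tendsto_iff_norm_sub_tendsto_zero.mp (hD x))
      simpa using (this.mul_const ‖y‖).mul_const ‖z‖
  have hc2 : Filter.Tendsto c2 Filter.atTop (nhds (S.m2 x (D y) z)) := by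
    rw [tendsto_iff_norm_sub_tendsto_zero]
    apply squeeze_zero (fun n => norm_nonneg _)
      (g := fun n => ‖x‖ * ‖(((3:ℂ)^n)⁻¹ • f ((3:ℂ)^n • y)) - D y‖ * ‖z‖)
    · intro n
      have : c2 n - S.m2 x (D y) z
          = S.m2 x ((((3:ℂ)^n)⁻¹ • f ((3:ℂ)^n • y)) - D y) z := by
        have := (S.m2_lin2 x z).map_sub (((3:ℂ)^n)⁻¹ • f ((3:ℂ)^n • y)) (D y)
        rw [this]
      rw [this]
      exact S.norm_m2 _ _ _
    · have := (tendsto_iff_norm_sub_tendsto_zero.mp (hD y))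
      simpa using ((this.const_mul ‖x‖).mul_const ‖z‖)
  have hc3 : Filter.Tendsto c3 Filter.atTop (nhds (S.m3 x y (D z))) := by
    rw [tendsto_iff_norm_sub_tendsto_zero]
    apply squeeze_zero (fun n => norm_nonneg _)
      (g := fun n => ‖x‖ * ‖y‖ * ‖(((3:ℂ)^n)⁻¹ • f ((3:ℂ)^n • z)) - D z‖)
    · intro n
      have : c3 n - S.m3 x y (D z)
          = S.m3 x y ((((3:ℂ)^n)⁻¹ • f ((3:ℂ)^n • z)) - D z) := by
        have := (S.m3_lin3 x y).map_sub (((3:ℂ)^n)⁻¹ • f ((3:ℂ)^n • z)) (D z)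
        rw [this]
      rw [this]
      exact S.norm_m3 _ _ _
    · have := (tendsto_iff_norm_sub_tendsto_zero.mp (hD z))
      simpa using (this.const_mul (‖x‖ * ‖y‖))
  -- combine
  have hsum : Filter.Tendsto E Filter.atTop
      (nhds (S.m1 (D x) y z + S.m2 x (D y) z + S.m3 x y (D z))) := by
    have h := ((herr.add hc1).add hc2).add hc3
    simp only [zero_add] at h
    have hfun : (fun n => (E n - c1 n - c2 n - c3 n) + c1 n + c2 n + c3 n) = E := by
      funext n; abel
    rwa [hfun] at h
  exact tendsto_nhds_unique hEw hsum
end
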